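/- arXiv:2509.23884 — 7 statements merged into one kernel-verified Lean document; each statement's English description precedes it below -/
import Mathlib

section
/- Let n, k, s, t be positive integers with k < n and s < n. There exists an (n,k,s)-configuration that is t-admissible if and only if n·t ≤ k·s. -/
/-- An `(n,k,s)`-configuration `c : ZMod n → Bool` (with exactly `k` positions `true`)
is `t`-admissible iff every window of `s` consecutive positions contains at least `t`
positions equal to `true`. The configuration exists iff `n * t ≤ k * s`. -/
theorem exists_admissible_configuration_iff (n k s t : ℕ) [NeZero n]
    (hk : 0 < k) (hs : 0 < s) (ht : 0 < t) (hkn : k < n) (hsn : s < n) :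
    (∃ c : ZMod n → Bool,
        (Finset.univ.filter (fun i => c i = true)).card = k ∧
        ∀ i : ZMod n,
          t ≤ ((Finset.range s).filter (fun (j : ℕ) => c (i + (j : ZMod n)) = true)).card)
      ↔ n * t ≤ k * s := by
  have hn : 0 < n := Nat.pos_of_ne_zero (NeZero.ne n)
  constructor
  · rintro ⟨c, hcard, hwin⟩
    have h1 : ∀ j : ℕ,
        (Finset.univ.filter (fun i : ZMod n => c (i + (j : ZMod n)) = true)).card = k := by
      intro j
      rw [← hcard]
      apply Finset.card_equiv (Equiv.addRight ((j : ZMod n)))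
      intro i
      simp
    have key : n * t ≤ s * k := by
      calc n * t = ∑ _i : ZMod n, t := by simp [ZMod.card, mul_comm]
        _ ≤ ∑ i : ZMod n,
              ((Finset.range s).filter (fun j : ℕ => c (i + (j : ZMod n)) = true)).card :=
            Finset.sum_le_sum (fun i _ => hwin i)
        _ = ∑ i : ZMod n, ∑ j ∈ Finset.range s,
              (if c (i + (j : ZMod n)) = true then 1 else 0) :=
            Finset.sum_congr rfl fun i _ => Finset.card_filter _ _
        _ = ∑ j ∈ Finset.range s, ∑ i : ZMod n,
              (if c (i + (j : ZMod n)) = true then 1 else 0) := Finset.sum_comm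
        _ = ∑ j ∈ Finset.range s, k := by
            refine Finset.sum_congr rfl fun j _ => ?_
            rw [← Finset.card_filter]
            exact h1 j
        _ = s * k := by simp [mul_comm]
    exact key.trans_eq (mul_comm s k)
  · intro hnt
    set f : ℕ → ℕ := fun j => j * k / n with hfdef
    have hper : ∀ a q : ℕ, f (a + n * q) = f a + q * k := by
      intro a q
      show (a + n * q) * k / n = a * k / n + q * k
      have : (a + n * q) * k = a * k + n * (q * k) := by ring
      rw [this, Nat.add_mul_div_left _ _ hn]
    have hmono : ∀ a b : ℕ, a ≤ b → f a ≤ f b := fun a b h =>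
      Nat.div_le_div_right (Nat.mul_le_mul_right k h)
    have hstep : ∀ a : ℕ, f (a + 1) ≤ f a + 1 := by
      intro a
      show (a + 1) * k / n ≤ a * k / n + 1
      have h3 : (a + 1) * k = a * k + k := by ring
      rw [h3]
      obtain ⟨q, r, hr, he, hq⟩ : ∃ q r, r < n ∧ a * k = n * q + r ∧ a * k / n = q :=
        ⟨a * k / n, a * k % n, Nat.mod_lt _ hn, (Nat.div_add_mod _ n).symm, rfl⟩
      rw [hq, he]
      have h4 : n * q + r + k = (r + k) + n * q := by ring
      rw [h4, Nat.add_mul_div_left _ _ hn]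
      have h5 : (r + k) / n < 2 := (Nat.div_lt_iff_lt_mul hn).mpr (by omega)
      omega
    have hsuper : ∀ a b : ℕ, f a + f b ≤ f (a + b) := by
      intro a b
      show a * k / n + b * k / n ≤ (a + b) * k / n
      rw [(Nat.le_div_iff_mul_le hn), add_mul, add_mul]
      exact Nat.add_le_add (Nat.div_mul_le_self _ _) (Nat.div_mul_le_self _ _)
    have hcount : ∀ m L : ℕ,
        ((Finset.range L).filter (fun j => f (m + j) < f (m + j + 1))).card
          = f (m + L) - f m := by
      intro m L
      induction L with
      | zero => simp
      | succ L ih =>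
        rw [Finset.range_add_one, Finset.filter_insert]
        have h1 := hmono (m + L) (m + L + 1) (by omega)
        have h2 := hstep (m + L)
        have h3 := hmono m (m + L) (by omega)
        have hmL : m + (L + 1) = m + L + 1 := by omega
        by_cases hc : f (m + L) < f (m + L + 1)
        · rw [if_pos hc, Finset.card_insert_of_notMem (by simp), ih, hmL]
          omega
        · rw [if_neg hc, ih, hmL]
          omega
    have hmod : ∀ j : ℕ, (f (j % n) < f (j % n + 1)) ↔ (f j < f (j + 1)) := by
      intro j
      have hdm := Nat.mod_add_div j n
      have h2 : f j = f (j % n) + (j / n) * k := by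
        conv_lhs => rw [← Nat.mod_add_div j n]
        exact hper _ _
      have h3 : f (j + 1) = f (j % n + 1) + (j / n) * k := by
        have h : j + 1 = (j % n + 1) + n * (j / n) := by omega
        rw [h, hper]
      omega
    have hfn : f n = k := by
      show n * k / n = k
      exact Nat.mul_div_cancel_left k hn
    have hf0 : f 0 = 0 := by simp [hfdef]
    have hts : t ≤ f s := by
      show t ≤ s * k / n
      rw [Nat.le_div_iff_mul_le hn]
      calc t * n = n * t := by ring
        _ ≤ k * s := hnt
        _ = s * k := by ring
    refine ⟨fun x => decide (f x.val < f (x.val + 1)), ?_, ?_⟩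
    · have hb : (Finset.univ.filter
          (fun i : ZMod n => decide (f i.val < f (i.val + 1)) = true)).card
          = ((Finset.range n).filter (fun j => f j < f (j + 1))).card := by
        apply Finset.card_bij (fun i _ => i.val)
        · intro a ha
          simp only [Finset.mem_filter, Finset.mem_univ, true_and, decide_eq_true_eq,
            Finset.mem_range] at ha ⊢
          exact ⟨ZMod.val_lt a, ha⟩
        · intro a _ b _ hab
          exact ZMod.val_injective n hab
        · intro b hb
          simp only [Finset.mem_filter, Finset.mem_range] at hb
          refine ⟨(b : ZMod n), ?_, ?_⟩
          · simp only [Finset.mem_filter, Finset.mem_univ, true_and, decide_eq_true_eq]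
            rw [ZMod.val_natCast, Nat.mod_eq_of_lt hb.1]
            exact hb.2
          · rw [ZMod.val_natCast, Nat.mod_eq_of_lt hb.1]
      rw [hb]
      have := hcount 0 n
      simp only [Nat.zero_add, zero_add] at this
      rw [this, hfn, hf0]
      omega
    · intro i
      have heq : ((Finset.range s).filter
            (fun j : ℕ => decide (f (i + (j : ZMod n)).val < f ((i + (j : ZMod n)).val + 1)) = true)).card
          = ((Finset.range s).filter (fun j => f (i.val + j) < f (i.val + j + 1))).card := by
        apply Finset.card_bij (fun j _ => j)
        · intro j hj
          simp only [Finset.mem_filter, Finset.mem_range, decide_eq_true_eq] at hj ⊢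
          refine ⟨hj.1, ?_⟩
          have hv : (i + (j : ZMod n)).val = (i.val + j) % n := by
            rw [show i + (j : ZMod n) = ((i.val + j : ℕ) : ZMod n) by
              push_cast [ZMod.natCast_val, ZMod.intCast_zmod_cast]
              simp [ZMod.natCast_val]]
            exact ZMod.val_natCast n _
          rw [hv] at hj
          exact (hmod (i.val + j)).mp hj.2
        · intro a b ha hb hab; exact hab
        · intro b hb
          simp only [Finset.mem_filter, Finset.mem_range, decide_eq_true_eq] at hb ⊢
          refine ⟨b, ⟨hb.1, ?_⟩, rfl⟩
          have hv : (i + (b : ZMod n)).val = (i.val + b) % n := by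
            rw [show i + (b : ZMod n) = ((i.val + b : ℕ) : ZMod n) by
              push_cast [ZMod.natCast_val, ZMod.intCast_zmod_cast]
              simp [ZMod.natCast_val]]
            exact ZMod.val_natCast n _
          rw [hv]
          exact (hmod (i.val + b)).mpr hb.2
      rw [heq, hcount i.val s]
      have := hsuper i.val s
      omega
end

section
/- Let n, k, s, t be positive integers with k < n and s < n, and suppose k·s < n·t. Then no (n,k,s)-configuration is t-admissible; that is, for every function c : ZMod n → Bool with exactly k positions equal to true, there exists a set of s consecutive positions containing fewer than t positions equal to true. -/
/-- If `k * s < n * t`, then no `(n,k,s)`-configuration is `t`-admissible: for every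
`c : ZMod n → Bool` with exactly `k` positions `true`, some window of `s` consecutive
positions contains fewer than `t` positions equal to `true`. -/
theorem no_admissible_configuration_of_lt (n k s t : ℕ) [NeZero n]
    (hk : 0 < k) (hs : 0 < s) (ht : 0 < t) (hkn : k < n) (hsn : s < n)
    (h : k * s < n * t)
    (c : ZMod n → Bool)
    (hc : (Finset.univ.filter (fun i => c i = true)).card = k) :
    ∃ i : ZMod n,
      ((Finset.range s).filter (fun (j : ℕ) => c (i + (j : ZMod n)) = true)).card < t := by
  by_contra hcon
  push_neg at hcon
  have shift : ∀ j : ZMod n,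
      (Finset.univ.filter (fun i : ZMod n => c (i + j) = true)).card = k := by
    intro j
    rw [← hc]
    apply Finset.card_bij' (fun i _ => i + j) (fun i _ => i - j)
    · intro a ha
      simpa using (Finset.mem_filter.mp ha).2
    · intro a ha
      simp only [Finset.mem_filter, Finset.mem_univ, true_and] at ha ⊢
      simpa [sub_add_cancel] using ha
    · intro a _; ring
    · intro a _; ring
  have sum1 : ∑ i : ZMod n,
      ((Finset.range s).filter (fun j : ℕ => c (i + (j : ZMod n)) = true)).card = k * s := by
    have : ∀ i : ZMod n,
        ((Finset.range s).filter (fun j : ℕ => c (i + (j : ZMod n)) = true)).card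
        = ∑ j ∈ Finset.range s, if c (i + (j : ZMod n)) = true then 1 else 0 := by
      intro i; rw [Finset.card_filter]
    simp only [this]
    rw [Finset.sum_comm]
    have : ∀ j ∈ Finset.range s,
        (∑ i : ZMod n, if c (i + (j : ZMod n)) = true then 1 else 0) = k := by
      intro j _
      rw [← shift (j : ZMod n)]
      rw [Finset.card_filter]
    rw [Finset.sum_congr rfl this]
    simp [mul_comm]
  have hge : n * t ≤ ∑ i : ZMod n,
      ((Finset.range s).filter (fun j : ℕ => c (i + (j : ZMod n)) = true)).card := by
    calc n * t = ∑ _i : ZMod n, t := by simp [ZMod.card, mul_comm]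
    _ ≤ _ := Finset.sum_le_sum (fun i _ => hcon i)
  rw [sum1] at hge
  omega
end

section
/- Let n, k, s, t be positive integers with k < n and s < n, and suppose n·t ≤ k·s. Then there exists a t-admissible (n,k,s)-configuration; that is, there exists a function c : ZMod n → Bool with exactly k positions equal to true such that every set of s consecutive positions contains at least t positions equal to true. -/
lemma adm_count_steps (n k : ℕ) (hn : 0 < n) (hkn : k ≤ n) (a : ℕ) : ∀ b : ℕ,
    ((Finset.range b).filter (fun j => (a + j) * k / n < (a + j + 1) * k / n)).card
      = (a + b) * k / n - a * k / n := by
  intro b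
  induction b with
  | zero => simp
  | succ b ih =>
    rw [Finset.range_add_one, Finset.filter_insert]
    have hmono : a * k / n ≤ (a + b) * k / n :=
      Nat.div_le_div_right (Nat.mul_le_mul_right _ (by omega))
    have hstep : (a + b + 1) * k / n ≤ (a + b) * k / n + 1 := by
      have h1 : (a + b + 1) * k ≤ (a + b) * k + n := by nlinarith
      calc (a + b + 1) * k / n ≤ ((a + b) * k + n) / n := Nat.div_le_div_right h1
        _ = (a + b) * k / n + 1 := by rw [Nat.add_div_right _ hn]
    have hab : a + (b + 1) = a + b + 1 := rfl
    by_cases hc : (a + b) * k / n < (a + b + 1) * k / n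
    · rw [if_pos hc, Finset.card_insert_of_notMem (by simp), ih, hab]
      omega
    · have hmono2 : (a + b) * k / n ≤ (a + b + 1) * k / n :=
        Nat.div_le_div_right (Nat.mul_le_mul_right _ (by omega))
      rw [if_neg hc, ih, hab]
      omega

lemma adm_cond_mod (n k : ℕ) (hn : 0 < n) (m : ℕ) :
    ((m % n) * k / n < (m % n + 1) * k / n) ↔ (m * k / n < (m + 1) * k / n) := by
  have e : ∀ a q : ℕ, (a + q * n) * k / n = a * k / n + q * k := by
    intro a q
    have : (a + q * n) * k = a * k + (q * k) * n := by ring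
    rw [this, Nat.add_mul_div_right _ _ hn]
  have h1 := e (m % n) (m / n)
  have h2 := e (m % n + 1) (m / n)
  have hm : m % n + m / n * n = m := Nat.mod_add_div' m n
  rw [hm] at h1
  have hm1 : m % n + 1 + m / n * n = m + 1 := by omega
  rw [hm1] at h2
  omega

/-- If `n * t ≤ k * s`, then there exists a `t`-admissible `(n,k,s)`-configuration:
a function `c : ZMod n → Bool` with exactly `k` positions `true` such that every window
of `s` consecutive positions contains at least `t` positions equal to `true`. -/
theorem exists_admissible_configuration_of_le (n k s t : ℕ) [NeZero n]
    (hk : 0 < k) (hs : 0 < s) (ht : 0 < t) (hkn : k < n) (hsn : s < n)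
    (h : n * t ≤ k * s) :
    ∃ c : ZMod n → Bool,
      (Finset.univ.filter (fun i => c i = true)).card = k ∧
      ∀ i : ZMod n,
        t ≤ ((Finset.range s).filter (fun (j : ℕ) => c (i + (j : ZMod n)) = true)).card := by
  have hn : 0 < n := Nat.pos_of_ne_zero (NeZero.ne n)
  set c : ZMod n → Bool := fun i => decide (i.val * k / n < (i.val + 1) * k / n) with hcdef
  have hc : ∀ m : ℕ, (c (m : ZMod n) = true) ↔ (m * k / n < (m + 1) * k / n) := by
    intro m
    simp only [hcdef, decide_eq_true_iff, ZMod.val_natCast]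
    exact adm_cond_mod n k hn m
  refine ⟨c, ?_, ?_⟩
  · have h1 : (Finset.univ.filter fun i : ZMod n => c i = true).card
        = ((Finset.range n).filter fun j : ℕ => c ((j : ℕ) : ZMod n) = true).card := by
      refine Finset.card_nbij' (fun i : ZMod n => i.val) (fun j : ℕ => (j : ZMod n))
        ?_ ?_ ?_ ?_
      · intro i hi
        simp only [Finset.mem_coe, Finset.mem_filter, Finset.mem_range]
        refine ⟨ZMod.val_lt i, ?_⟩
        rw [ZMod.natCast_val, ZMod.cast_id]
        exact (Finset.mem_filter.mp hi).2
      · intro j hj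
        simp only [Finset.mem_coe, Finset.mem_filter, Finset.mem_univ, true_and]
        exact (Finset.mem_filter.mp hj).2
      · intro i _
        simp only
        rw [ZMod.natCast_val, ZMod.cast_id]
      · intro j hj
        simp only
        exact ZMod.val_natCast_of_lt (Finset.mem_range.mp (Finset.mem_filter.mp hj).1)
    rw [h1, Finset.filter_congr (fun j _ => by rw [hc j])]
    have h2 := adm_count_steps n k hn (le_of_lt hkn) 0 n
    simp only [zero_add] at h2
    rw [h2, Nat.zero_mul, Nat.zero_div, Nat.sub_zero, Nat.mul_div_cancel_left k hn]
  · intro i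
    set m := i.val with hm
    have key : ∀ j : ℕ, c (i + (j : ZMod n)) = c ((m + j : ℕ) : ZMod n) := by
      intro j
      congr 1
      push_cast
      rw [ZMod.natCast_val, ZMod.cast_id]
    rw [Finset.filter_congr (fun j _ => by rw [key j, hc (m + j)])]
    rw [adm_count_steps n k hn (le_of_lt hkn) m s]
    have hsup : m * k / n + s * k / n ≤ (m + s) * k / n := by
      rw [Nat.le_div_iff_mul_le hn, add_mul, add_mul]
      exact Nat.add_le_add (Nat.div_mul_le_self _ _) (Nat.div_mul_le_self _ _)
    have hts : t ≤ s * k / n := by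
      rw [Nat.le_div_iff_mul_le hn]
      nlinarith
    omega
end

section
/- Let n, k, m be positive integers with 2·k ≤ n and m ≤ n. Then there exists a coloring χ : ZMod n → ℤ taking only the values −1 and 1, with exactly k positions colored 1, such that for every i : ZMod n, |∑_{j=0}^{m−1} χ(i+j)| ≤ m − 2·⌊m·k/n⌋. -/
section aux

variable (n k : ℕ)

private def fdiv (x : ℕ) : ℕ := x * k / n

variable {n k}

private lemma fdiv_mono (x : ℕ) : fdiv n k x ≤ fdiv n k (x + 1) :=
  Nat.div_le_div_right (by nlinarith)

private lemma fdiv_step (hn : 0 < n) (hkn : k ≤ n) (x : ℕ) :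
    fdiv n k (x + 1) ≤ fdiv n k x + 1 := by
  unfold fdiv
  rw [add_mul, one_mul]
  calc (x * k + k) / n ≤ (x * k + n) / n := Nat.div_le_div_right (by omega)
    _ = x * k / n + 1 := Nat.add_div_right _ hn

private lemma fdiv_shift (hn : 0 < n) (x t : ℕ) :
    fdiv n k (x + n * t) = fdiv n k x + t * k := by
  unfold fdiv
  rw [add_mul, mul_assoc, Nat.add_mul_div_left _ _ hn]

private lemma fdiv_superadd (hn : 0 < n) (a b : ℕ) :
    fdiv n k a + fdiv n k b ≤ fdiv n k (a + b) := by
  unfold fdiv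
  rw [add_mul, Nat.add_div hn]
  omega

private lemma fdiv_subadd (hn : 0 < n) (a b : ℕ) :
    fdiv n k (a + b) ≤ fdiv n k a + fdiv n k b + 1 := by
  unfold fdiv
  rw [add_mul, Nat.add_div hn]
  split <;> omega

end aux

/-- Discrepancy bound: for `2 k ≤ n` and `m ≤ n` there is a coloring
`χ : ZMod n → {-1, 1}` with exactly `k` positions colored `1` whose discrepancy on every
window of `m` consecutive positions is at most `m - 2 ⌊m k / n⌋`. -/
theorem exists_coloring_discrepancy_bound (n k m : ℕ) [NeZero n]
    (hk : 0 < k) (hm : 0 < m) (h2k : 2 * k ≤ n) (hmn : m ≤ n) :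
    ∃ χ : ZMod n → ℤ,
      (∀ i : ZMod n, χ i = -1 ∨ χ i = 1) ∧
      (Finset.univ.filter (fun i => χ i = 1)).card = k ∧
      ∀ i : ZMod n,
        |∑ j ∈ Finset.range m, χ (i + (j : ZMod n))|
          ≤ (m : ℤ) - 2 * ((m * k / n : ℕ) : ℤ) := by
  have hn : 0 < n := Nat.pos_of_ne_zero (NeZero.ne n)
  have hkn : k ≤ n := by omega
  -- gather all facts about fdiv, then abstract it
  have hstep : ∀ x, fdiv n k (x + 1) ≤ fdiv n k x + 1 := fdiv_step hn hkn
  have hmono : ∀ x, fdiv n k x ≤ fdiv n k (x + 1) := fdiv_mono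
  have hshift : ∀ x t, fdiv n k (x + n * t) = fdiv n k x + t * k := fdiv_shift hn
  have hsuper : ∀ a b, fdiv n k a + fdiv n k b ≤ fdiv n k (a + b) := fdiv_superadd hn
  have hsub : ∀ a b, fdiv n k (a + b) ≤ fdiv n k a + fdiv n k b + 1 := fdiv_subadd hn
  have hfn : fdiv n k n = k := by unfold fdiv; rw [Nat.mul_div_cancel_left _ hn]
  have hf0 : fdiv n k 0 = 0 := by unfold fdiv; simp
  have hfm : m * k / n = fdiv n k m := rfl
  have hfmk : fdiv n k m * n ≤ m * k := Nat.div_mul_le_self _ _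
  have hdvd_eq : n ∣ m * k → ∀ a, fdiv n k (a + m) = fdiv n k a + fdiv n k m := by
    intro hdvd a
    unfold fdiv
    obtain ⟨t, htt⟩ := hdvd
    rw [add_mul, htt, Nat.mul_div_cancel_left _ hn, Nat.add_mul_div_left _ _ hn]
  have hlt : ¬ n ∣ m * k → fdiv n k m * n < m * k := by
    intro hdvd
    have hmod : m * k % n ≠ 0 := fun h => hdvd (Nat.dvd_of_mod_eq_zero h)
    have hdm := Nat.div_add_mod (m * k) n
    unfold fdiv
    rw [mul_comm]
    omega
  set f : ℕ → ℕ := fdiv n k with hf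
  clear hf
  clear_value f
  set χ : ZMod n → ℤ := fun x => if f (x.val + 1) = f x.val then -1 else 1 with hχ
  have hχval : ∀ i : ZMod n, χ i = -1 ∨ χ i = 1 := by
    intro i
    by_cases h : f (i.val + 1) = f i.val <;> simp [hχ, h]
  -- term formula
  have hterm : ∀ x : ℕ, χ ((x : ZMod n)) = 2 * ((f (x + 1) : ℤ) - f x) - 1 := by
    intro x
    set v := x % n with hv
    set t := x / n with ht
    have hx : x = v + n * t := by rw [hv, ht]; exact (Nat.mod_add_div x n).symm
    have hvx : ((x : ZMod n)).val = v := ZMod.val_natCast n x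
    have hx1 : f x = f v + t * k := by conv_lhs => rw [hx, hshift]
    have hx2 : f (x + 1) = f (v + 1) + t * k := by
      conv_lhs => rw [hx, add_right_comm v (n * t) 1, hshift]
    have hst := hstep v
    have hmo := hmono v
    simp only [hχ, hvx]
    split_ifs with h
    · have : f (x + 1) = f x := by omega
      rw [this]; ring
    · have : f (x + 1) = f x + 1 := by omega
      rw [this]; push_cast; ring
  refine ⟨χ, hχval, ?_, ?_⟩
  · -- exactly k ones
    have hcard : (Finset.univ.filter (fun i : ZMod n => χ i = 1)).card
        = ((Finset.range n).filter (fun x : ℕ => χ ((x : ZMod n)) = 1)).card := by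
      refine Finset.card_bij' (fun i _ => i.val) (fun x _ => ((x : ℕ) : ZMod n)) ?_ ?_ ?_ ?_
      · intro i hi
        simp only [Finset.mem_filter, Finset.mem_range, Finset.mem_univ, true_and] at hi ⊢
        exact ⟨i.val_lt, by rwa [ZMod.natCast_val, ZMod.cast_id]⟩
      · intro x hx
        simp only [Finset.mem_filter, Finset.mem_range, Finset.mem_univ, true_and] at hx ⊢
        exact hx.2
      · intro x _
        show ((x.val : ℕ) : ZMod n) = x
        rw [ZMod.natCast_val, ZMod.cast_id]
      · intro x hx
        simp only [Finset.mem_filter, Finset.mem_range] at hx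
        exact ZMod.val_natCast_of_lt hx.1
    rw [hcard]
    have hsum1 : ((((Finset.range n).filter (fun x : ℕ => χ ((x : ZMod n)) = 1))).card : ℤ)
        = ∑ x ∈ Finset.range n, ((f (x + 1) : ℤ) - f x) := by
      rw [Finset.card_filter]
      push_cast
      apply Finset.sum_congr rfl
      intro x _
      have ht := hterm x
      have hst := hstep x
      have hmo := hmono x
      by_cases h : f (x + 1) = f x
      · have hχx : χ ((x : ZMod n)) = -1 := by rw [ht, h]; ring
        rw [if_neg (by rw [hχx]; norm_num), h]; ring
      · have h1 : f (x + 1) = f x + 1 := by omega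
        have hχx : χ ((x : ZMod n)) = 1 := by rw [ht, h1]; push_cast; ring
        rw [if_pos hχx, h1]; push_cast; ring
    have htel : ∑ x ∈ Finset.range n, ((f (x + 1) : ℤ) - f x) = (f n : ℤ) - f 0 :=
      Finset.sum_range_sub (fun x => (f x : ℤ)) n
    have hcastk : ((((Finset.range n).filter (fun x : ℕ => χ ((x : ZMod n)) = 1))).card : ℤ)
        = k := by rw [hsum1, htel, hfn, hf0]; simp
    exact_mod_cast hcastk
  · -- discrepancy bound
    intro i
    set a := i.val with ha
    have hsum : ∑ j ∈ Finset.range m, χ (i + (j : ZMod n))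
        = 2 * ((f (a + m) : ℤ) - f a) - m := by
      have hcong : ∀ j ∈ Finset.range m, χ (i + (j : ZMod n))
          = (2 * ((f (a + (j + 1)) : ℤ) - f (a + j)) - 1) := by
        intro j _
        have hi : i + (j : ZMod n) = ((a + j : ℕ) : ZMod n) := by
          push_cast [ha]
          rw [ZMod.natCast_val, ZMod.cast_id]
        rw [hi, hterm (a + j)]
        ring_nf
      rw [Finset.sum_congr rfl hcong, Finset.sum_sub_distrib, ← Finset.mul_sum,
        Finset.sum_range_sub (fun j => (f (a + j) : ℤ))]
      simp [mul_comm]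
    rw [hsum]
    -- bounds on f (a + m) - f a
    have hlow : f a + f m ≤ f (a + m) := hsuper a m
    have h2fm : 2 * f m ≤ m := by
      have h1 : 2 * (f m * n) ≤ m * n := by
        calc 2 * (f m * n) ≤ 2 * (m * k) := by omega
          _ = m * (2 * k) := by ring
          _ ≤ m * n := Nat.mul_le_mul_left m h2k
      have := Nat.le_of_mul_le_mul_right (by linarith : (2 * f m) * n ≤ m * n) hn
      exact this
    have hhigh : f (a + m) + f m ≤ f a + m := by
      by_cases hdvd : n ∣ m * k
      · have heq := hdvd_eq hdvd a
        omega
      · have hsub' := hsub a m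
        have hlt' := hlt hdvd
        have h2fm' : 2 * f m < m := by
          have h1 : 2 * (f m * n) < m * n := by
            calc 2 * (f m * n) < 2 * (m * k) := by omega
              _ = m * (2 * k) := by ring
              _ ≤ m * n := Nat.mul_le_mul_left m h2k
          rw [← mul_assoc] at h1
          exact Nat.lt_of_mul_lt_mul_right h1
        omega
    rw [hfm, abs_le]
    have h1 : (f a : ℤ) + f m ≤ f (a + m) := by exact_mod_cast hlow
    have h2 : (f (a + m) : ℤ) + f m ≤ f a + m := by exact_mod_cast hhigh
    constructor <;> linarith
end

section
/- Let n > k ≥ 1 be coprime integers and let [μ₁, …, μ_t] be the continued fraction expansion of n/k. Then the Smith word S_t built from the quotients [μ₁−1, μ₂, …, μ_t] is a list of length n containing exactly k ones. -/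
/-- Value of a (finite) continued fraction with the given list of quotients:
`cfVal [μ₁, …, μ_t] = μ₁ + 1/(μ₂ + 1/(⋯ + 1/μ_t))`. -/
def cfVal : List ℕ → ℚ
  | [] => 0
  | a :: l => (a : ℚ) + (cfVal l)⁻¹

/-- The Smith word built from the quotients `[μ₁ - 1, μ₂, …, μ_t]`, where
`[μ₁, …, μ_t]` is the input list: `S₁ = 0^(μ₁-1) ++ [1]`, `S₂ = S₁^μ₂ ++ [0]`,
and `S_j = S_{j-1}^(μ_j) ++ S_{j-2}` for `j ≥ 3` (letters `1 = A`, `0 = B`). -/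
def smithWord : List ℕ → List ℤ
  | [] => []
  | μ₁ :: rest =>
    (rest.foldl (fun (p : List ℤ × List ℤ) (μ : ℕ) =>
        (p.2, (List.replicate μ p.2).flatten ++ p.1))
      (([0] : List ℤ), List.replicate (μ₁ - 1) (0 : ℤ) ++ [1])).2

/- Auxiliary definitions -/
def sstep : List ℤ × List ℤ → ℕ → List ℤ × List ℤ :=
  fun p μ => (p.2, (List.replicate μ p.2).flatten ++ p.1)

def step : ℕ × ℕ → ℕ → ℕ × ℕ := fun p a => (p.2, a * p.2 + p.1)

def nd : List ℕ → ℕ × ℕ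
  | [] => (1, 0)
  | a :: l => (a * (nd l).1 + (nd l).2, (nd l).1)

lemma count_flatten_replicate (μ : ℕ) (L : List ℤ) :
    ((List.replicate μ L).flatten).count 1 = μ * L.count 1 := by
  induction μ with
  | zero => simp
  | succ m ih => simp [List.replicate_succ, ih, Nat.succ_mul]; ring

lemma fold_len_count (l : List ℕ) : ∀ p : List ℤ × List ℤ,
    ((l.foldl sstep p).1.length, (l.foldl sstep p).2.length)
      = l.foldl step (p.1.length, p.2.length) ∧
    ((l.foldl sstep p).1.count 1, (l.foldl sstep p).2.count 1)
      = l.foldl step (p.1.count 1, p.2.count 1) := by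
  induction l with
  | nil => intro p; simp
  | cons x l ih =>
    intro p
    have h1 : (sstep p x).1.length = p.2.length := rfl
    have h2 : (sstep p x).2.length = x * p.2.length + p.1.length := by
      simp [sstep, List.length_flatten]
    have h3 : (sstep p x).1.count 1 = p.2.count 1 := rfl
    have h4 : (sstep p x).2.count 1 = x * p.2.count 1 + p.1.count 1 := by
      simp [sstep, count_flatten_replicate]
    constructor
    · rw [List.foldl_cons, List.foldl_cons, (ih (sstep p x)).1, h1, h2]; rfl
    · rw [List.foldl_cons, List.foldl_cons, (ih (sstep p x)).2, h3, h4]; rfl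

lemma foldl_step_linear (l : List ℕ) : ∀ a b : ℕ,
    List.foldl step (a, b) l =
      (a * (List.foldl step (1,0) l).1 + b * (List.foldl step (0,1) l).1,
       a * (List.foldl step (1,0) l).2 + b * (List.foldl step (0,1) l).2) := by
  induction l with
  | nil => intro a b; simp
  | cons x l ih =>
    intro a b
    have e1 : List.foldl step (a, b) (x :: l) = List.foldl step (b, x * b + a) l := rfl
    have e2 : List.foldl step (1, 0) (x :: l) = List.foldl step (0, 1) l := by
      simp [List.foldl_cons, step]
    have e3 : List.foldl step (0, 1) (x :: l) = List.foldl step (1, x) l := by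
      simp [List.foldl_cons, step]
    rw [e1, e2, e3, ih b (x*b+a), ih 1 x]
    apply Prod.ext <;> simp <;> ring

lemma foldl_step_nd (l : List ℕ) :
    (List.foldl step (1,0) l).2 = (nd l).2 ∧ (List.foldl step (0,1) l).2 = (nd l).1 := by
  induction l with
  | nil => simp [nd]
  | cons x l ih =>
    obtain ⟨h1, h2⟩ := ih
    have e2 : List.foldl step (1, 0) (x :: l) = List.foldl step (0, 1) l := by
      simp [List.foldl_cons, step]
    have e3 : List.foldl step (0, 1) (x :: l) = List.foldl step (1, x) l := by
      simp [List.foldl_cons, step]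
    constructor
    · rw [e2, h2]; rfl
    · rw [e3, foldl_step_linear l 1 x]
      simp [nd, ← h1, ← h2]; ring

lemma nd_fst_pos (l : List ℕ) (hpos : ∀ a ∈ l, 1 ≤ a) : 1 ≤ (nd l).1 := by
  induction l with
  | nil => simp [nd]
  | cons x l ih =>
    have hx : 1 ≤ x := hpos x (by simp)
    have h := ih (fun a ha => hpos a (by simp [ha]))
    simp only [nd]
    calc 1 ≤ x * (nd l).1 := Nat.one_le_iff_ne_zero.mpr (by positivity)
    _ ≤ x * (nd l).1 + (nd l).2 := Nat.le_add_right _ _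

lemma nd_coprime (l : List ℕ) : Nat.Coprime (nd l).1 (nd l).2 := by
  induction l with
  | nil => simp [nd]
  | cons x l ih =>
    simp only [nd]
    rw [Nat.add_comm]
    exact (Nat.coprime_add_mul_right_left _ _ _).mpr ih.symm

lemma cfVal_nd (l : List ℕ) (hne : l ≠ []) (hpos : ∀ a ∈ l, 1 ≤ a) :
    cfVal l = ((nd l).1 : ℚ) / ((nd l).2 : ℚ) := by
  induction l with
  | nil => simp at hne
  | cons x l ih =>
    cases l with
    | nil => simp [cfVal, nd]
    | cons y l' =>
      have hpos' : ∀ a ∈ y :: l', 1 ≤ a := fun a ha => hpos a (by simp [ha])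
      have h1 : 1 ≤ (nd (y :: l')).1 := nd_fst_pos _ hpos'
      have hq1 : ((nd (y :: l')).1 : ℚ) ≠ 0 := by
        exact_mod_cast Nat.one_le_iff_ne_zero.mp h1
      have h2 : 1 ≤ (nd (y :: l')).2 := by
        show 1 ≤ (nd l').1
        exact nd_fst_pos _ (fun a ha => hpos' a (by simp [ha]))
      have hq2 : ((nd (y :: l')).2 : ℚ) ≠ 0 := by
        exact_mod_cast Nat.one_le_iff_ne_zero.mp h2
      have hval := ih (by simp) hpos'
      have hrw : nd (x :: y :: l')
          = (x * (nd (y :: l')).1 + (nd (y :: l')).2, (nd (y :: l')).1) := rfl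
      show (x : ℚ) + (cfVal (y :: l'))⁻¹ = _
      rw [hval, hrw]
      push_cast
      rw [inv_div]
      field_simp

/-- For coprime `n > k ≥ 1` with continued fraction expansion `n/k = [μ₁, …, μ_t]`,
the Smith word built from `[μ₁ - 1, μ₂, …, μ_t]` has length `n` and contains exactly
`k` ones. -/
theorem smithWord_length_count (n k : ℕ) (hk : 1 ≤ k) (hkn : k < n)
    (hcop : Nat.Coprime n k) (μ : List ℕ) (hne : μ ≠ [])
    (hpos : ∀ a ∈ μ, 1 ≤ a) (hcanon : μ.length = 1 ∨ μ.getLast! ≠ 1)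
    (hval : cfVal μ = (n : ℚ) / k) :
    (smithWord μ).length = n ∧ (smithWord μ).count 1 = k := by
  obtain ⟨x, rest, rfl⟩ : ∃ x rest, μ = x :: rest := by
    cases μ with
    | nil => exact absurd rfl hne
    | cons a l => exact ⟨a, l, rfl⟩
  set μ := x :: rest with hμ
  have hndval : cfVal μ = ((nd μ).1 : ℚ) / ((nd μ).2 : ℚ) := cfVal_nd μ hne hpos
  have hN : 1 ≤ (nd μ).1 := nd_fst_pos μ hpos
  have hD : 1 ≤ (nd μ).2 := by
    cases rest with
    | nil => simp [hμ, nd]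
    | cons y l' =>
      show 1 ≤ (nd (y :: l')).1
      exact nd_fst_pos _ (fun a ha => hpos a (List.mem_cons_of_mem x ha))
  have hcross : (nd μ).1 * k = n * (nd μ).2 := by
    have hq : ((nd μ).1 : ℚ) * k = n * ((nd μ).2 : ℚ) := by
      have hk0 : (k : ℚ) ≠ 0 := by positivity
      have hD0 : ((nd μ).2 : ℚ) ≠ 0 := by
        exact_mod_cast Nat.one_le_iff_ne_zero.mp hD
      have h := hval.symm.trans hndval
      field_simp at h
      linarith [h]
    exact_mod_cast hq
  have hcopnd : Nat.Coprime (nd μ).1 (nd μ).2 := nd_coprime μ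
  have hnd1 : (nd μ).1 = n := by
    apply Nat.dvd_antisymm
    · exact (Nat.Coprime.dvd_of_dvd_mul_right hcopnd ⟨k, hcross.symm⟩)
    · exact (Nat.Coprime.dvd_of_dvd_mul_right hcop ⟨(nd μ).2, hcross⟩)
  have hnd2 : (nd μ).2 = k := by
    have h := hcross
    rw [hnd1] at h
    exact (Nat.eq_of_mul_eq_mul_left (by omega) h).symm
  -- connect smithWord to the numeric fold
  have hx : 1 ≤ x := hpos x (by rw [hμ]; exact List.mem_cons_self)
  have hsw : smithWord μ =
      (rest.foldl sstep (([0] : List ℤ), List.replicate (x - 1) (0 : ℤ) ++ [1])).2 := rfl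
  have hflc := fold_len_count rest (([0] : List ℤ), List.replicate (x - 1) (0 : ℤ) ++ [1])
  have hl := hflc.1
  have hc := hflc.2
  simp only at hl hc
  have i1 : ([0] : List ℤ).length = 1 := rfl
  have i2 : (List.replicate (x - 1) (0 : ℤ) ++ [1]).length = x := by
    simp [Nat.sub_add_cancel hx]
  have i3 : List.count 1 ([0] : List ℤ) = 0 := by decide
  have i4 : List.count 1 (List.replicate (x - 1) (0 : ℤ) ++ [1]) = 1 := by
    simp [List.count_replicate]
  rw [i1, i2] at hl
  rw [i3, i4] at hc
  have hlen : (smithWord μ).length = (List.foldl step (1, x) rest).2 := by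
    rw [hsw]; exact congrArg Prod.snd hl
  have hcnt : (smithWord μ).count 1 = (List.foldl step (0, 1) rest).2 := by
    rw [hsw]; exact congrArg Prod.snd hc
  have e2 : List.foldl step (1, 0) μ = List.foldl step (0, 1) rest := by
    simp [hμ, List.foldl_cons, step]
  have e3 : List.foldl step (0, 1) μ = List.foldl step (1, x) rest := by
    simp [hμ, List.foldl_cons, step]
  obtain ⟨hcnt', hlen'⟩ := foldl_step_nd μ
  constructor
  · rw [hlen, ← e3, hlen', hnd1]
  · rw [hcnt, ← e2, hcnt', hnd2]
end

section
/- Let n > k ≥ 1 be coprime integers, let [μ₁, …, μ_t] be the continued fraction expansion of n/k, let S_t be the Smith word built from the quotients [μ₁−1, μ₂, …, μ_t], and let w be the mechanical word of slope k/n. Then S_t is a cyclic rotation of the period word of w: there exists a natural number r such that for every j with 0 ≤ j ≤ n−1, the ((j + r) mod n)-th letter of S_t equals w(j). -/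
/-- The mechanical word of slope `α`: `w m = ⌈α (m+1)⌉ - ⌈α m⌉`. -/
noncomputable def mechanicalWord (α : ℝ) (m : ℕ) : ℤ :=
  ⌈α * (m + 1)⌉ - ⌈α * m⌉

def cont : List ℕ → ℕ
  | [] => 1
  | [a] => a
  | a :: b :: l => a * cont (b :: l) + cont l

lemma cont_pos : ∀ l : List ℕ, (∀ a ∈ l, 1 ≤ a) → 1 ≤ cont l := by
  intro l
  induction l using cont.induct with
  | case1 => intro _; simp [cont]
  | case2 a => intro h; simpa [cont] using h a (by simp)
  | case3 a b l ih1 ih2 =>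
      intro h
      have h1 := ih1 (fun x hx => h x (by simp at hx ⊢; tauto))
      have h2 := ih2 (fun x hx => h x (by simp at hx ⊢; tauto))
      have ha := h a (by simp)
      simp only [cont]
      nlinarith

lemma cont_snoc : ∀ (l : List ℕ) (x : ℕ), l ≠ [] →
    cont (l ++ [x]) = x * cont l + cont l.dropLast := by
  intro l
  induction l using cont.induct with
  | case1 => simp
  | case2 a => intro x _; simp [cont]; ring
  | case3 a b l ih1 ih2 =>
      intro x _
      rcases l with _ | ⟨c, l'⟩
      · simp [cont]; ring
      · have h1 := ih1 x (by simp)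
        have h2 := ih2 x (by simp)
        simp only [List.cons_append] at h1 h2 ⊢
        simp only [cont] at *
        rw [h1, h2]
        simp [List.dropLast, cont]
        ring

lemma cont_coprime : ∀ (a : ℕ) (l : List ℕ), Nat.Coprime (cont (a :: l)) (cont l) := by
  intro a l
  induction l generalizing a with
  | nil => simp [cont, Nat.coprime_one_right]
  | cons b l ih =>
      have : cont (a :: b :: l) = cont l + cont (b :: l) * a := by simp [cont]; ring
      rw [this]
      exact (Nat.coprime_add_mul_left_left (cont l) (cont (b::l)) a).mpr (ih b).symm

lemma cfVal_eq : ∀ l : List ℕ, l ≠ [] → (∀ a ∈ l, 1 ≤ a) →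
    cfVal l = (cont l : ℚ) / (cont l.tail : ℚ) := by
  intro l
  induction l using cont.induct with
  | case1 => simp
  | case2 a => intro _ _; simp [cfVal, cont]
  | case3 a b l ih1 _ =>
      intro _ h
      have hb : ∀ x ∈ b :: l, 1 ≤ x := fun x hx => h x (by simp at hx ⊢; tauto)
      have h1 := ih1 (by simp) hb
      have hp : (0:ℚ) < (cont (b :: l) : ℚ) := by
        exact_mod_cast cont_pos _ hb
      have hp2 : (0:ℚ) < (cont l : ℚ) ∨ (cont l : ℚ) = 0 := by
        rcases Nat.eq_zero_or_pos (cont l) with h0 | h0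
        · right; exact_mod_cast h0
        · left; exact_mod_cast h0
      show (a : ℚ) + (cfVal (b :: l))⁻¹ = _
      rw [h1]
      have hl1 : (1:ℚ) ≤ (cont l : ℚ) := by
        have : 1 ≤ cont l := cont_pos l (fun x hx => h x (by simp at hx ⊢; tauto))
        exact_mod_cast this
      have hlp : (0:ℚ) < (cont l : ℚ) := by linarith
      have : cont (a :: b :: l) = a * cont (b :: l) + cont l := rfl
      rw [this]
      simp only [List.tail_cons]
      push_cast
      rw [inv_div]
      field_simp


lemma ediv_eq_of_bounds {A N T : ℤ} (hN : 0 < N) (h1 : T * N ≤ A) (h2 : A < (T+1) * N) :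
    A / N = T := by
  have hle : T ≤ A / N := (Int.le_ediv_iff_mul_le hN).mpr h1
  have hlt : A / N < T + 1 := (Int.ediv_lt_iff_lt_mul hN).mpr h2
  omega

lemma nonneg_of_mul_left {n x : ℤ} (hn : 0 < n) (h : 0 ≤ n * x) : 0 ≤ x :=
  (mul_nonneg_iff_of_pos_left hn).mp h

lemma lt_of_mul_left {n x y : ℤ} (hn : 0 < n) (h : n * x < n * y) : x < y :=
  (mul_lt_mul_iff_right₀ hn).mp h

section Identities
variable {k n k' n' μ m i₀ : ℤ}

lemma idA_copy (hdet : k * n' = k' * n + 1) (hn : 1 ≤ n) (hn' : 1 ≤ n')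
    (hm0 : 0 ≤ m) (hm : m + 1 ≤ μ) (hi0 : 0 ≤ i₀) (hi : i₀ ≤ n) :
    ((μ*k+k') * (m*n+i₀) + (μ*k+k')) / (μ*n+n') = m*k + (k*i₀ + (k-1)) / n := by
  have hN : (0:ℤ) < μ*n+n' := by nlinarith
  set q : ℤ := (k*i₀ + (k-1)) / n with hq
  set r : ℤ := (k*i₀ + (k-1)) % n with hr
  have hqr : k*i₀ + (k-1) = n*q + r := (Int.mul_ediv_add_emod _ _).symm
  have hr0 : 0 ≤ r := Int.emod_nonneg _ (by omega)
  have hrn : r < n := Int.emod_lt_of_pos _ (by omega)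
  apply ediv_eq_of_bounds hN
  · have key : n * (((μ*k+k') * (m*n+i₀) + (μ*k+k')) - (m*k+q)*(μ*n+n'))
        = (r+1)*(μ*n+n') - (i₀+1) - m*n := by
      linear_combination (-1 - i₀ - n*m) * hdet + (μ*n+n') * hqr
    have h1 : 0 ≤ (r+1)*(μ*n+n') - (i₀+1) - m*n := by nlinarith
    nlinarith [nonneg_of_mul_left (by omega : (0:ℤ) < n) (by rw [key]; exact h1)]
  · have key : n * (((μ*k+k') * (m*n+i₀) + (μ*k+k')) - (m*k+q)*(μ*n+n'))
        = (r+1)*(μ*n+n') - (i₀+1) - m*n := by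
      linear_combination (-1 - i₀ - n*m) * hdet + (μ*n+n') * hqr
    have h2 : n * (((μ*k+k') * (m*n+i₀) + (μ*k+k')) - (m*k+q)*(μ*n+n')) < n * (μ*n+n') := by
      rw [key]; nlinarith
    have := lt_of_mul_left (by omega : (0:ℤ) < n) h2
    nlinarith

lemma idA_tail (hdet : k * n' = k' * n + 1) (hn' : 1 ≤ n') (hnn' : n' ≤ n) (hμ : 1 ≤ μ)
    (hk' : 0 ≤ k') (hi0 : 0 ≤ i₀) (hi : i₀ ≤ n') :
    ((μ*k+k') * (μ*n+i₀) + (μ*k+k')) / (μ*n+n') = μ*k + (k'*i₀ + k') / n' := by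
  have hn : 1 ≤ n := hnn'.trans' hn'
  have hN : (0:ℤ) < μ*n+n' := by nlinarith
  set q : ℤ := (k'*i₀ + k') / n' with hq
  set r : ℤ := (k'*i₀ + k') % n' with hr
  have hqr : k'*i₀ + k' = n'*q + r := (Int.mul_ediv_add_emod _ _).symm
  have hr0 : 0 ≤ r := Int.emod_nonneg _ (by omega)
  have hrn : r < n' := Int.emod_lt_of_pos _ (by omega)
  have key : n' * (((μ*k+k') * (μ*n+i₀) + (μ*k+k')) - (μ*k+q)*(μ*n+n'))
      = μ*(i₀+1) + μ*n*r + r*n' - μ*n' := by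
    linear_combination (μ*(i₀+1) - n'*μ) * hdet + (μ*n+n') * hqr
  apply ediv_eq_of_bounds hN
  · have h1 : 0 ≤ μ*(i₀+1) + μ*n*r + r*n' - μ*n' := by
      rcases eq_or_lt_of_le hr0 with h0 | h0
      · -- r = 0 : then n' ∣ k'*(i₀+1), coprime ⇒ n' ≤ i₀+1
        have hdvd : n' ∣ k' * (i₀+1) := ⟨q, by linear_combination hqr - h0⟩
        have hcop : IsCoprime n' k' := ⟨k, -n, by linarith⟩
        have hdvd2 : n' ∣ i₀ + 1 := hcop.dvd_of_dvd_mul_left hdvd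
        have : n' ≤ i₀ + 1 := Int.le_of_dvd (by omega) hdvd2
        nlinarith
      · nlinarith
    nlinarith [nonneg_of_mul_left (by omega : (0:ℤ) < n') (by rw [key]; exact h1)]
  · have h2 : μ*(i₀+1) + μ*n*r + r*n' - μ*n' < n' * (μ*n+n') := by
      nlinarith [mul_nonneg (by nlinarith : (0:ℤ) ≤ μ*n) (by omega : (0:ℤ) ≤ n'-1-r),
        mul_nonneg (by omega : (0:ℤ) ≤ n'-1-r) (by omega : (0:ℤ) ≤ n'),
        mul_nonneg (by omega : (0:ℤ) ≤ μ-1) (by omega : (0:ℤ) ≤ n'-i₀)]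
    have h2' : n' * (((μ*k+k') * (μ*n+i₀) + (μ*k+k')) - (μ*k+q)*(μ*n+n')) < n' * (μ*n+n') := by
      rw [key]; exact h2
    have := lt_of_mul_left (by omega : (0:ℤ) < n') h2'
    nlinarith
end Identities

section Identities2
variable {k n k' n' μ m i₀ : ℤ}

lemma idB_copy (hdet : k' * n = k * n' + 1) (hn : 1 ≤ n) (hn' : 1 ≤ n')
    (hm0 : 0 ≤ m) (hm : m + 1 ≤ μ) (hi0 : 0 ≤ i₀) (hi : i₀ ≤ n) :
    ((μ*k+k') * (m*n+i₀) + (μ*k+k') - 1) / (μ*n+n') = m*k + (k*i₀ + k) / n := by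
  have hN : (0:ℤ) < μ*n+n' := by nlinarith
  set q : ℤ := (k*i₀ + k) / n with hq
  set r : ℤ := (k*i₀ + k) % n with hr
  have hqr : k*i₀ + k = n*q + r := (Int.mul_ediv_add_emod _ _).symm
  have hr0 : 0 ≤ r := Int.emod_nonneg _ (by omega)
  have hrn : r < n := Int.emod_lt_of_pos _ (by omega)
  have key : n * (((μ*k+k') * (m*n+i₀) + (μ*k+k') - 1) - (m*k+q)*(μ*n+n'))
      = r*(μ*n+n') + (i₀+1) + n*(m-1) := by
    linear_combination (1 + i₀ + n*m) * hdet + (μ*n+n') * hqr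
  apply ediv_eq_of_bounds hN
  · have h1 : 0 ≤ r*(μ*n+n') + (i₀+1) + n*(m-1) := by
      rcases eq_or_lt_of_le hm0 with hm' | hm'
      · rcases eq_or_lt_of_le hr0 with h0 | h0
        · have hdvd : n ∣ k * (i₀+1) := ⟨q, by linear_combination hqr - h0⟩
          have hcop : IsCoprime n k := ⟨k', -n', by linarith⟩
          have hdvd2 : n ∣ i₀ + 1 := hcop.dvd_of_dvd_mul_left hdvd
          have : n ≤ i₀ + 1 := Int.le_of_dvd (by omega) hdvd2
          nlinarith
        · nlinarith
      · nlinarith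
    have h1' : 0 ≤ n * (((μ*k+k') * (m*n+i₀) + (μ*k+k') - 1) - (m*k+q)*(μ*n+n')) := by
      rw [key]; exact h1
    nlinarith [nonneg_of_mul_left (by omega : (0:ℤ) < n) h1']
  · have h2 : r*(μ*n+n') + (i₀+1) + n*(m-1) < n * (μ*n+n') := by
      nlinarith [mul_nonneg (by omega : (0:ℤ) ≤ n-1-r) (le_of_lt hN),
        mul_nonneg (by omega : (0:ℤ) ≤ μ-1-m) (by omega : (0:ℤ) ≤ n)]
    have h2' : n * (((μ*k+k') * (m*n+i₀) + (μ*k+k') - 1) - (m*k+q)*(μ*n+n')) < n * (μ*n+n') := by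
      rw [key]; exact h2
    have := lt_of_mul_left (by omega : (0:ℤ) < n) h2'
    nlinarith

lemma idB_tail (hdet : k' * n = k * n' + 1) (hn' : 1 ≤ n') (hnn' : n' ≤ n) (hμ : 1 ≤ μ)
    (hi0 : 0 ≤ i₀) (hi : i₀ ≤ n') :
    ((μ*k+k') * (μ*n+i₀) + (μ*k+k') - 1) / (μ*n+n') = μ*k + (k'*i₀ + (k'-1)) / n' := by
  have hn : 1 ≤ n := hnn'.trans' hn'
  have hN : (0:ℤ) < μ*n+n' := by nlinarith
  set q : ℤ := (k'*i₀ + (k'-1)) / n' with hq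
  set r : ℤ := (k'*i₀ + (k'-1)) % n' with hr
  have hqr : k'*i₀ + (k'-1) = n'*q + r := (Int.mul_ediv_add_emod _ _).symm
  have hr0 : 0 ≤ r := Int.emod_nonneg _ (by omega)
  have hrn : r < n' := Int.emod_lt_of_pos _ (by omega)
  have key : n' * (((μ*k+k') * (μ*n+i₀) + (μ*k+k') - 1) - (μ*k+q)*(μ*n+n'))
      = μ*(n*(1+r) + n' - (i₀+1)) + r*n' := by
    linear_combination (-μ*(1+i₀) + n'*μ) * hdet + (μ*n+n') * hqr
  apply ediv_eq_of_bounds hN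
  · have h1 : 0 ≤ μ*(n*(1+r) + n' - (i₀+1)) + r*n' := by
      nlinarith [mul_nonneg (by omega : (0:ℤ) ≤ μ) (by nlinarith : (0:ℤ) ≤ n*(1+r) + n' - (i₀+1)),
        mul_nonneg hr0 (by omega : (0:ℤ) ≤ n')]
    have h1' : 0 ≤ n' * (((μ*k+k') * (μ*n+i₀) + (μ*k+k') - 1) - (μ*k+q)*(μ*n+n')) := by
      rw [key]; exact h1
    nlinarith [nonneg_of_mul_left (by omega : (0:ℤ) < n') h1']
  · have h2 : μ*(n*(1+r) + n' - (i₀+1)) + r*n' < n' * (μ*n+n') := by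
      rcases lt_or_ge r (n'-1) with hcase | hcase
      · nlinarith [mul_nonneg (by nlinarith : (0:ℤ) ≤ μ*n) (by omega : (0:ℤ) ≤ n'-2-r),
          mul_nonneg (by omega : (0:ℤ) ≤ n'-2-r) (by omega : (0:ℤ) ≤ n'),
          mul_nonneg (by omega : (0:ℤ) ≤ μ) hi0,
          mul_nonneg (by omega : (0:ℤ) ≤ μ) (by omega : (0:ℤ) ≤ n-n')]
      · -- r = n'-1 : then n' ∣ k'*(i₀+1) hence n' ≤ i₀+1
        have hreq : r = n' - 1 := by omega
        have hdvd : n' ∣ k' * (i₀+1) := ⟨q+1, by linear_combination hqr + hreq⟩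
        have hcop : IsCoprime n' k' := ⟨-k, n, by linarith⟩
        have hdvd2 : n' ∣ i₀ + 1 := hcop.dvd_of_dvd_mul_left hdvd
        have : n' ≤ i₀ + 1 := Int.le_of_dvd (by omega) hdvd2
        nlinarith [mul_nonneg (by omega : (0:ℤ) ≤ μ) (by omega : (0:ℤ) ≤ i₀ + 1 - n')]
    have h2' : n' * (((μ*k+k') * (μ*n+i₀) + (μ*k+k') - 1) - (μ*k+q)*(μ*n+n')) < n' * (μ*n+n') := by
      rw [key]; exact h2
    have := lt_of_mul_left (by omega : (0:ℤ) < n') h2'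
    nlinarith
end Identities2

/-- letter of the phase word of slope k/n with phase c at position i -/
def chi (k n c i : ℕ) : ℤ :=
  ((k:ℤ) * (i+1) + c) / n - ((k:ℤ) * i + c) / n

def PhaseWord (w : List ℤ) (k n c : ℕ) : Prop :=
  ∀ i, i < n → w[i]? = some (chi k n c i)

lemma length_flatten_replicate (v : List ℤ) (m : ℕ) :
    ((List.replicate m v).flatten).length = m * v.length := by
  induction m with
  | zero => simp
  | succ m ih => simp [List.replicate_succ, ih]; ring

lemma getElem?_flatten_replicate (v : List ℤ) (n : ℕ) (hv : v.length = n) (hn : 0 < n) :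
    ∀ (m i : ℕ), i < m * n → ((List.replicate m v).flatten)[i]? = v[i % n]? := by
  intro m
  induction m with
  | zero => intro i h; omega
  | succ m ih =>
      intro i h
      rw [Nat.succ_mul] at h
      rw [List.replicate_succ, List.flatten_cons]
      rcases lt_or_ge i n with hc | hc
      · rw [List.getElem?_append_left (by omega), Nat.mod_eq_of_lt hc]
      · rw [List.getElem?_append_right (by omega), hv, ih (i - n) (by omega),
          ← Nat.mod_eq_sub_mod hc]

/-- the invariant carried through the foldl -/
def SInv (p : List ℤ × List ℤ) (k' n' k n : ℕ) : Prop :=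
  p.1.length = n' ∧ p.2.length = n ∧ 1 ≤ n' ∧ n' ≤ n ∧
  ((k * n' = k' * n + 1 ∧ PhaseWord p.2 k n (k-1) ∧ PhaseWord p.1 k' n' k') ∨
   (k' * n = k * n' + 1 ∧ PhaseWord p.2 k n k ∧ PhaseWord p.1 k' n' (k'-1)))

section ChiLemmas
variable (k n k' n' μ : ℕ)

lemma chiA_copy (hdet : k * n' = k' * n + 1) (hn : 1 ≤ n) (m i₀ : ℕ)
    (hm : m + 1 ≤ μ) (hi₀ : i₀ < n) :
    chi (μ*k+k') (μ*n+n') (μ*k+k') (m*n+i₀) = chi k n (k-1) i₀ := by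
  have hk : 1 ≤ k := Nat.pos_of_ne_zero (by rintro rfl; simp at hdet)
  have hn' : 1 ≤ n' := Nat.pos_of_ne_zero (by rintro rfl; simp at hdet)
  have hdetZ : (k:ℤ) * n' = k' * n + 1 := by exact_mod_cast hdet
  have h1 := idA_copy (μ := (μ:ℤ)) (m := (m:ℤ)) (i₀ := (i₀:ℤ)) hdetZ
    (by exact_mod_cast hn) (by exact_mod_cast hn')
    (Int.natCast_nonneg m) (by exact_mod_cast hm) (Int.natCast_nonneg i₀)
    (by exact_mod_cast hi₀.le)
  have h2 := idA_copy (μ := (μ:ℤ)) (m := (m:ℤ)) (i₀ := (i₀:ℤ)+1) hdetZ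
    (by exact_mod_cast hn) (by exact_mod_cast hn')
    (Int.natCast_nonneg m) (by exact_mod_cast hm) (by positivity)
    (by exact_mod_cast hi₀)
  unfold chi
  push_cast [Nat.cast_sub hk]
  rw [show ((μ:ℤ)*k+k') * (↑m*↑n+↑i₀+1) + ((μ:ℤ)*↑k+↑k')
      = (↑μ*↑k+↑k') * (↑m*↑n+(↑i₀+1)) + (↑μ*↑k+↑k') by ring, h2, h1]
  ring

lemma chiA_tail (hdet : k * n' = k' * n + 1) (hnn' : n' ≤ n) (hμ : 1 ≤ μ) (i₀ : ℕ)
    (hi₀ : i₀ < n') :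
    chi (μ*k+k') (μ*n+n') (μ*k+k') (μ*n+i₀) = chi k' n' k' i₀ := by
  have hn' : 1 ≤ n' := Nat.pos_of_ne_zero (by rintro rfl; simp at hdet)
  have hdetZ : (k:ℤ) * n' = k' * n + 1 := by exact_mod_cast hdet
  have h1 := idA_tail (μ := (μ:ℤ)) (i₀ := (i₀:ℤ)) hdetZ
    (by exact_mod_cast hn') (by exact_mod_cast hnn') (by exact_mod_cast hμ)
    (Int.natCast_nonneg k') (Int.natCast_nonneg i₀) (by exact_mod_cast hi₀.le)
  have h2 := idA_tail (μ := (μ:ℤ)) (i₀ := (i₀:ℤ)+1) hdetZ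
    (by exact_mod_cast hn') (by exact_mod_cast hnn') (by exact_mod_cast hμ)
    (Int.natCast_nonneg k') (by positivity) (by exact_mod_cast hi₀)
  unfold chi
  push_cast
  rw [show ((μ:ℤ)*k+k') * (↑μ*↑n+↑i₀+1) + ((μ:ℤ)*↑k+↑k')
      = (↑μ*↑k+↑k') * (↑μ*↑n+(↑i₀+1)) + (↑μ*↑k+↑k') by ring, h2, h1]
  ring

lemma chiB_copy (hdet : k' * n = k * n' + 1) (hn' : 1 ≤ n') (m i₀ : ℕ)
    (hm : m + 1 ≤ μ) (hi₀ : i₀ < n) :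
    chi (μ*k+k') (μ*n+n') (μ*k+k'-1) (m*n+i₀) = chi k n k i₀ := by
  have hk' : 1 ≤ k' := Nat.pos_of_ne_zero (by rintro rfl; simp at hdet)
  have hn : 1 ≤ n := Nat.pos_of_ne_zero (by rintro rfl; simp at hdet)
  have hK : 1 ≤ μ*k+k' := by omega
  have hdetZ : (k':ℤ) * n = k * n' + 1 := by exact_mod_cast hdet
  have h1 := idB_copy (μ := (μ:ℤ)) (m := (m:ℤ)) (i₀ := (i₀:ℤ)) hdetZ
    (by exact_mod_cast hn) (by exact_mod_cast hn')
    (Int.natCast_nonneg m) (by exact_mod_cast hm) (Int.natCast_nonneg i₀)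
    (by exact_mod_cast hi₀.le)
  have h2 := idB_copy (μ := (μ:ℤ)) (m := (m:ℤ)) (i₀ := (i₀:ℤ)+1) hdetZ
    (by exact_mod_cast hn) (by exact_mod_cast hn')
    (Int.natCast_nonneg m) (by exact_mod_cast hm) (by positivity)
    (by exact_mod_cast hi₀)
  unfold chi
  push_cast [Nat.cast_sub hK]
  rw [show ((μ:ℤ)*k+k') * (↑m*↑n+↑i₀+1) + (((μ:ℤ)*↑k+↑k') - 1)
      = ((↑μ*↑k+↑k') * (↑m*↑n+(↑i₀+1)) + (↑μ*↑k+↑k') - 1) by ring,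
     show ((μ:ℤ)*k+k') * (↑m*↑n+↑i₀) + (((μ:ℤ)*↑k+↑k') - 1)
      = ((↑μ*↑k+↑k') * (↑m*↑n+↑i₀) + (↑μ*↑k+↑k') - 1) by ring, h2, h1]
  ring

lemma chiB_tail (hdet : k' * n = k * n' + 1) (hn' : 1 ≤ n') (hnn' : n' ≤ n) (hμ : 1 ≤ μ)
    (i₀ : ℕ) (hi₀ : i₀ < n') :
    chi (μ*k+k') (μ*n+n') (μ*k+k'-1) (μ*n+i₀) = chi k' n' (k'-1) i₀ := by
  have hk' : 1 ≤ k' := Nat.pos_of_ne_zero (by rintro rfl; simp at hdet)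
  have hK : 1 ≤ μ*k+k' := by omega
  have hdetZ : (k':ℤ) * n = k * n' + 1 := by exact_mod_cast hdet
  have h1 := idB_tail (μ := (μ:ℤ)) (i₀ := (i₀:ℤ)) hdetZ
    (by exact_mod_cast hn') (by exact_mod_cast hnn') (by exact_mod_cast hμ)
    (Int.natCast_nonneg i₀) (by exact_mod_cast hi₀.le)
  have h2 := idB_tail (μ := (μ:ℤ)) (i₀ := (i₀:ℤ)+1) hdetZ
    (by exact_mod_cast hn') (by exact_mod_cast hnn') (by exact_mod_cast hμ)
    (by positivity) (by exact_mod_cast hi₀)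
  unfold chi
  push_cast [Nat.cast_sub hK, Nat.cast_sub hk']
  rw [show ((μ:ℤ)*k+k') * (↑μ*↑n+↑i₀+1) + (((μ:ℤ)*↑k+↑k') - 1)
      = ((↑μ*↑k+↑k') * (↑μ*↑n+(↑i₀+1)) + (↑μ*↑k+↑k') - 1) by ring,
     show ((μ:ℤ)*k+k') * (↑μ*↑n+↑i₀) + (((μ:ℤ)*↑k+↑k') - 1)
      = ((↑μ*↑k+↑k') * (↑μ*↑n+↑i₀) + (↑μ*↑k+↑k') - 1) by ring, h2, h1]
  ring

end ChiLemmas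

lemma step_inv (μ' : ℕ) (hμ : 1 ≤ μ') (u v : List ℤ) (k' n' k n : ℕ)
    (h : SInv (u, v) k' n' k n) :
    SInv (v, (List.replicate μ' v).flatten ++ u) k n (μ'*k+k') (μ'*n+n') := by
  obtain ⟨hlu, hlv, hn'1, hn'n, hdisj⟩ := h
  simp only at hlu hlv
  have hn1 : 1 ≤ n := hn'1.trans hn'n
  have hflen : ((List.replicate μ' v).flatten).length = μ'*n := by
    rw [length_flatten_replicate, hlv]
  have hlen : ((List.replicate μ' v).flatten ++ u).length = μ'*n + n' := by
    rw [List.length_append, hflen, hlu]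
  have hmono : n ≤ μ'*n := Nat.le_mul_of_pos_left n hμ
  refine ⟨hlv, hlen, hn1, by omega, ?_⟩
  rcases hdisj with ⟨hdet, hv, hu⟩ | ⟨hdet, hv, hu⟩
  · right
    refine ⟨by rw [Nat.mul_add, hdet]; ring, ?_, hv⟩
    intro i hi
    rcases lt_or_ge i (μ'*n) with hc | hc
    · obtain ⟨m, i₀, rfl, h1, h2⟩ : ∃ m i₀, i = m*n + i₀ ∧ i₀ < n ∧ m + 1 ≤ μ' := by
        refine ⟨i / n, i % n, by rw [mul_comm]; exact (Nat.div_add_mod i n).symm,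
          Nat.mod_lt _ hn1, (Nat.div_lt_iff_lt_mul hn1).mpr hc⟩
      have hmod : (m*n+i₀) % n = i₀ := by
        rw [mul_comm m n, Nat.mul_add_mod, Nat.mod_eq_of_lt h1]
      rw [List.getElem?_append_left (by rw [hflen]; exact hc),
        getElem?_flatten_replicate v n hlv hn1 μ' _ hc, hmod, hv i₀ h1]
      exact congrArg some (chiA_copy k n k' n' μ' hdet hn1 m i₀ h2 h1).symm
    · obtain ⟨i₀, rfl, h1⟩ : ∃ i₀, i = μ'*n + i₀ ∧ i₀ < n' := ⟨i - μ'*n, by omega, by omega⟩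
      rw [List.getElem?_append_right (by rw [hflen]; exact hc), hflen,
        Nat.add_sub_cancel_left, hu i₀ h1]
      exact congrArg some (chiA_tail k n k' n' μ' hdet hn'n hμ i₀ h1).symm
  · left
    refine ⟨by rw [Nat.add_mul, hdet]; ring, ?_, hv⟩
    intro i hi
    rcases lt_or_ge i (μ'*n) with hc | hc
    · obtain ⟨m, i₀, rfl, h1, h2⟩ : ∃ m i₀, i = m*n + i₀ ∧ i₀ < n ∧ m + 1 ≤ μ' := by
        refine ⟨i / n, i % n, by rw [mul_comm]; exact (Nat.div_add_mod i n).symm,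
          Nat.mod_lt _ hn1, (Nat.div_lt_iff_lt_mul hn1).mpr hc⟩
      have hmod : (m*n+i₀) % n = i₀ := by
        rw [mul_comm m n, Nat.mul_add_mod, Nat.mod_eq_of_lt h1]
      rw [List.getElem?_append_left (by rw [hflen]; exact hc),
        getElem?_flatten_replicate v n hlv hn1 μ' _ hc, hmod, hv i₀ h1]
      exact congrArg some (chiB_copy k n k' n' μ' hdet hn'1 m i₀ h2 h1).symm
    · obtain ⟨i₀, rfl, h1⟩ : ∃ i₀, i = μ'*n + i₀ ∧ i₀ < n' := ⟨i - μ'*n, by omega, by omega⟩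
      rw [List.getElem?_append_right (by rw [hflen]; exact hc), hflen,
        Nat.add_sub_cancel_left, hu i₀ h1]
      exact congrArg some (chiB_tail k n k' n' μ' hdet hn'1 hn'n hμ i₀ h1).symm

lemma ceil_div_nat (a n : ℕ) (hn : 0 < n) : ⌈(a:ℝ)/(n:ℝ)⌉ = ((a:ℤ) + n - 1)/n := by
  have hnz : ((n:ℤ)) ≠ 0 := by exact_mod_cast hn.ne'
  set q : ℤ := ((a:ℤ) + n - 1)/n with hq
  set s : ℤ := ((a:ℤ) + n - 1) % n with hs
  have hqr : (a:ℤ) + n - 1 = n*q + s := (Int.mul_ediv_add_emod _ _).symm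
  have hs0 : 0 ≤ s := Int.emod_nonneg _ hnz
  have hsn : s < n := Int.emod_lt_of_pos _ (by exact_mod_cast hn)
  rw [Int.ceil_eq_iff]
  have hnR : (0:ℝ) < (n:ℝ) := by exact_mod_cast hn
  constructor
  · rw [lt_div_iff₀ hnR]
    have : ((q:ℤ) - 1) * n < a := by nlinarith
    calc ((q:ℝ) - 1) * n = (((q - 1) * n : ℤ) : ℝ) := by push_cast; ring
      _ < a := by exact_mod_cast this
  · rw [div_le_iff₀ hnR]
    have : (a:ℤ) ≤ q * n := by nlinarith
    calc (a:ℝ) = ((a:ℤ):ℝ) := by push_cast; ring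
      _ ≤ ((q*n : ℤ):ℝ) := by exact_mod_cast this
      _ = q * n := by push_cast; ring

lemma mech_eq_chi (k n j : ℕ) (hn : 0 < n) :
    mechanicalWord ((k:ℝ)/n) j = chi k n (n-1) j := by
  unfold mechanicalWord chi
  have e1 : (k:ℝ)/n * (j+1) = ((k*(j+1) : ℕ):ℝ)/n := by push_cast; ring
  have e2 : (k:ℝ)/n * j = ((k*j : ℕ):ℝ)/n := by push_cast; ring
  rw [e1, e2, ceil_div_nat _ _ hn, ceil_div_nat _ _ hn]
  have g1 : ((k*(j+1) : ℕ):ℤ) + n - 1 = (k:ℤ)*(j+1) + ((n-1 : ℕ):ℤ) := by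
    push_cast [Nat.cast_sub hn]; ring
  have g2 : ((k*j : ℕ):ℤ) + n - 1 = (k:ℤ)*j + ((n-1 : ℕ):ℤ) := by
    push_cast [Nat.cast_sub hn]; ring
  rw [g1, g2]

lemma ediv_shift {n x y s : ℤ} (hn : n ≠ 0) (h : x = y + n*s) : x/n = y/n + s := by
  rw [h, mul_comm n s, Int.add_mul_ediv_right _ _ hn]

lemma chi_rotate (k n c r j : ℕ) (hn : 0 < n) (hc : (k*r + c) % n = n - 1) :
    chi k n c ((j+r) % n) = chi k n (n-1) j := by
  have hnz : ((n:ℤ)) ≠ 0 := by exact_mod_cast hn.ne'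
  set i := (j+r) % n with hi
  set u := (j+r) / n with hu
  have hiu : i + n*u = j + r := by rw [hi, hu]; exact Nat.mod_add_div _ _
  set v := (k*r+c) / n with hv
  have hvc : k*r + c = n*v + (n-1) := by
    conv_lhs => rw [← Nat.div_add_mod (k*r+c) n]
    rw [hc]
  have hiuZ : (i:ℤ) + n*u = j + r := by exact_mod_cast hiu
  have hvZ : (k:ℤ)*r + c = n*v + ((n-1:ℕ):ℤ) := by exact_mod_cast hvc
  unfold chi
  have d1 : ((k:ℤ) * (i+1) + c) / n = ((k:ℤ)*((j:ℤ)+1) + ((n-1:ℕ):ℤ))/n + ((v:ℤ) - k*u) := by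
    apply ediv_shift hnz
    linear_combination (k:ℤ) * hiuZ + hvZ
  have d2 : ((k:ℤ) * i + c) / n = ((k:ℤ)*(j:ℤ) + ((n-1:ℕ):ℤ))/n + ((v:ℤ) - k*u) := by
    apply ediv_shift hnz
    linear_combination (k:ℤ) * hiuZ + hvZ
  rw [d1, d2]
  ring

/-- the fold step used in smithWord -/
def sw_step : List ℤ × List ℤ → ℕ → List ℤ × List ℤ :=
  fun p μ => (p.2, (List.replicate μ p.2).flatten ++ p.1)

/-- numeric companion fold -/
def nf : ℕ × ℕ → List ℕ → ℕ × ℕ :=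
  fun p l => l.foldl (fun q μ => (q.2, μ*q.2+q.1)) p

lemma fold_inv : ∀ (rest : List ℕ), (∀ a ∈ rest, 1 ≤ a) →
    ∀ (u v : List ℤ) (k' n' k n : ℕ), SInv (u,v) k' n' k n →
    SInv (rest.foldl sw_step (u,v)) (nf (k',k) rest).1 (nf (n',n) rest).1
      (nf (k',k) rest).2 (nf (n',n) rest).2 := by
  intro rest
  induction rest with
  | nil => intro _ u v k' n' k n h; exact h
  | cons μ₀ l ih =>
      intro hall u v k' n' k n h
      have h1 : 1 ≤ μ₀ := hall μ₀ (by simp)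
      have hstep := step_inv μ₀ h1 u v k' n' k n h
      exact ih (fun a ha => hall a (by simp [ha])) v _ k n (μ₀*k+k') (μ₀*n+n') hstep

lemma nf_cont : ∀ (rest pre : List ℕ), pre ≠ [] →
    nf (cont pre.dropLast, cont pre) rest = (cont (pre ++ rest).dropLast, cont (pre ++ rest)) := by
  intro rest
  induction rest with
  | nil => intro pre _; simp [nf]
  | cons x l ih =>
      intro pre hpre
      have e1 : nf (cont pre.dropLast, cont pre) (x :: l)
          = nf (cont pre, x * cont pre + cont pre.dropLast) l := rfl
      have e2 : (cont pre, x * cont pre + cont pre.dropLast)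
          = (cont (pre ++ [x]).dropLast, cont (pre ++ [x])) := by
        rw [List.dropLast_concat, cont_snoc pre x hpre]
      rw [e1, e2, ih (pre ++ [x]) (by simp)]
      simp

lemma nf_n (μ₁ : ℕ) (rest : List ℕ) : (nf (1, μ₁) rest).2 = cont (μ₁ :: rest) := by
  have := nf_cont rest [μ₁] (by simp)
  simp only [List.dropLast_singleton, List.singleton_append] at this
  rw [show (cont [] : ℕ) = 1 from rfl, show cont [μ₁] = μ₁ from rfl] at this
  rw [this]

lemma nf_k (rest : List ℕ) : (nf (0, 1) rest).2 = cont rest := by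
  rcases rest with _ | ⟨x, l⟩
  · rfl
  · have e1 : nf (0, 1) (x :: l) = nf (1, x) l := by
      show nf (1, x*1+0) l = nf (1, x) l
      norm_num
    rw [e1]
    have := nf_cont l [x] (by simp)
    simp only [List.dropLast_singleton, List.singleton_append] at this
    rw [show (cont [] : ℕ) = 1 from rfl, show cont [x] = x from rfl] at this
    rw [this]

lemma base_sinv (μ₁ : ℕ) (h1 : 1 ≤ μ₁) :
    SInv (([0] : List ℤ), List.replicate (μ₁ - 1) (0 : ℤ) ++ [1]) 0 1 1 μ₁ := by
  refine ⟨rfl, by simp; omega, le_refl 1, h1, Or.inl ⟨by simp, ?_, ?_⟩⟩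
  · intro i hi
    rcases lt_or_ge i (μ₁ - 1) with hc | hc
    · rw [List.getElem?_append_left (by simpa using hc), List.getElem?_replicate, if_pos hc]
      have z1 : ((1:ℕ):ℤ) * (i+1) + ((1-1 : ℕ):ℤ) = (i+1 : ℤ) := by push_cast; ring
      have z2 : ((1:ℕ):ℤ) * i + ((1-1 : ℕ):ℤ) = (i : ℤ) := by push_cast; ring
      unfold chi
      rw [z1, z2, Int.ediv_eq_zero_of_lt (by positivity) (by exact_mod_cast (by omega : i + 1 < μ₁)),
        Int.ediv_eq_zero_of_lt (by positivity) (by exact_mod_cast (by omega : i < μ₁))]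
      simp
    · have hieq : i = μ₁ - 1 := by omega
      rw [List.getElem?_append_right (by simpa using hc)]
      simp only [List.length_replicate]
      rw [show i - (μ₁ - 1) = 0 by omega]
      have z1 : ((1:ℕ):ℤ) * (i+1) + ((1-1 : ℕ):ℤ) = (μ₁ : ℤ) := by
        push_cast; rw [hieq]; push_cast [Nat.cast_sub h1]; ring
      have z2 : ((1:ℕ):ℤ) * i + ((1-1 : ℕ):ℤ) = ((μ₁:ℤ) - 1) := by
        push_cast; rw [hieq]; push_cast [Nat.cast_sub h1]; ring
      unfold chi
      rw [z1, z2, Int.ediv_self (by omega : (μ₁:ℤ) ≠ 0),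
        Int.ediv_eq_zero_of_lt (by omega) (by omega)]
      simp
  · intro i hi
    interval_cases i
    unfold chi
    norm_num

/-- For coprime `n > k ≥ 1` with continued fraction expansion `n/k = [μ₁, …, μ_t]`,
the Smith word built from `[μ₁ - 1, μ₂, …, μ_t]` is a cyclic rotation of the period
word (first `n` letters) of the mechanical word of slope `k / n`. -/
theorem smithWord_rotation_of_mechanical (n k : ℕ) (hk : 1 ≤ k) (hkn : k < n)
    (hcop : Nat.Coprime n k) (μ : List ℕ) (hne : μ ≠ [])
    (hpos : ∀ a ∈ μ, 1 ≤ a) (hcanon : μ.length = 1 ∨ μ.getLast! ≠ 1)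
    (hval : cfVal μ = (n : ℚ) / k) :
    ∃ r : ℕ, ∀ j < n,
      (smithWord μ)[(j + r) % n]? = some (mechanicalWord ((k : ℝ) / n) j) := by
  rcases μ with _ | ⟨μ₁, rest⟩
  · exact absurd rfl hne
  have hμ1 : 1 ≤ μ₁ := hpos μ₁ (by simp)
  have hrest : ∀ a ∈ rest, 1 ≤ a := fun a ha => hpos a (by simp [ha])
  -- identify n and k with the continuants
  have hcv := cfVal_eq (μ₁ :: rest) (by simp) hpos
  rw [hval] at hcv
  simp only [List.tail_cons] at hcv
  have hcm : 1 ≤ cont (μ₁ :: rest) := cont_pos _ hpos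
  have hct : 1 ≤ cont rest := cont_pos _ hrest
  have hk0 : ((k:ℚ)) ≠ 0 := by exact_mod_cast (by omega : k ≠ 0)
  have hct0 : ((cont rest : ℚ)) ≠ 0 := by exact_mod_cast (by omega : cont rest ≠ 0)
  have hx : (n:ℚ) * cont rest = cont (μ₁ :: rest) * k := (div_eq_div_iff hk0 hct0).mp hcv
  have hxN : n * cont rest = cont (μ₁ :: rest) * k := by exact_mod_cast hx
  have hcc : Nat.Coprime (cont (μ₁ :: rest)) (cont rest) := cont_coprime μ₁ rest
  have hdn : n ∣ cont (μ₁ :: rest) :=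
    hcop.dvd_of_dvd_mul_right ⟨cont rest, hxN.symm⟩
  have hdm : cont (μ₁ :: rest) ∣ n := hcc.dvd_of_dvd_mul_right ⟨k, hxN⟩
  have hn_eq : cont (μ₁ :: rest) = n := Nat.dvd_antisymm hdm hdn
  have hk_eq : cont rest = k := by
    apply Nat.eq_of_mul_eq_mul_left (show 0 < n by omega)
    rw [hxN, hn_eq]
  -- run the fold invariant
  have hinv := fold_inv rest hrest _ _ 0 1 1 μ₁ (base_sinv μ₁ hμ1)
  have e1 : (nf (0, 1) rest).2 = k := by rw [nf_k, hk_eq]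
  have e2 : (nf (1, μ₁) rest).2 = n := by rw [nf_n, hn_eq]
  rw [e1, e2] at hinv
  obtain ⟨_, _, _, _, hdisj⟩ := hinv
  have hsw : smithWord (μ₁ :: rest)
      = (rest.foldl sw_step (([0] : List ℤ), List.replicate (μ₁ - 1) (0 : ℤ) ++ [1])).2 := rfl
  obtain ⟨c, hcle, hP⟩ : ∃ c, c ≤ n - 1 ∧
      PhaseWord (rest.foldl sw_step (([0] : List ℤ),
        List.replicate (μ₁ - 1) (0 : ℤ) ++ [1])).2 k n c := by
    rcases hdisj with ⟨_, hP, _⟩ | ⟨_, hP, _⟩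
    · exact ⟨k - 1, by omega, hP⟩
    · exact ⟨k, by omega, hP⟩
  -- choose the rotation
  obtain ⟨b, -, hb⟩ := Nat.exists_mul_mod_eq_one_of_coprime hcop.symm (by omega : 1 < n)
  set d := n - 1 - c with hd
  set t := (k * b) / n with ht
  have hbt : k * b = n * t + 1 := by
    rw [ht, ← hb]
    exact (Nat.div_add_mod _ _).symm
  refine ⟨b * d, fun j hj => ?_⟩
  have him : (j + b * d) % n < n := Nat.mod_lt _ (by omega)
  rw [hsw, hP _ him]
  have hcmod : (k * (b * d) + c) % n = n - 1 := by
    have h3 : k * (b * d) + c = n * (t * d) + (d + c) := by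
      rw [← mul_assoc, hbt]; ring
    have h4 : d + c = n - 1 := by omega
    rw [h3, h4, Nat.mul_add_mod, Nat.mod_eq_of_lt (by omega)]
  exact congrArg some
    ((chi_rotate k n c (b * d) j (by omega) hcmod).trans (mech_eq_chi k n j (by omega)).symm)
end

section
/- Let n > k ≥ 1 be coprime integers, let [μ₁, …, μ_t] be the continued fraction expansion of n/k, and let S_t be the Smith word built from the quotients [μ₁−1, μ₂, …, μ_t]. Then the infinite periodic word obtained by repeating S_t is balanced with slope k/n: for every natural number n₁ and every m ≥ 1, the number of ones among positions n₁, n₁+1, …, n₁+m−1 of the infinite word is at least ⌊m·k/n⌋ and at most ⌈m·k/n⌉. -/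
def IsGood (w : List ℤ) (p q r : ℕ) : Prop :=
  w.length = p ∧ r < p ∧ ∀ j ≤ p, (w.take j).count 1 = (j * q + r) / p

lemma cop_pq {p q p' q' e : ℕ} (he : e ≤ 1)
    (hdet : (q:ℤ) * p' - p * q' = 2 * e - 1) : Nat.Coprime p q := by
  rw [← Nat.isCoprime_iff_coprime]
  interval_cases e
  · exact ⟨q', -p', by linear_combination -hdet⟩
  · exact ⟨-q', p', by linear_combination hdet⟩

lemma cop_pq' {p q p' q' e : ℕ} (he : e ≤ 1)
    (hdet : (q:ℤ) * p' - p * q' = 2 * e - 1) : Nat.Coprime p' q' := by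
  rw [← Nat.isCoprime_iff_coprime]
  interval_cases e
  · exact ⟨-q, p, by linear_combination -hdet⟩
  · exact ⟨q, -p, by linear_combination hdet⟩

lemma lemA {p q p' q' e μ j v b : ℕ} (he : e ≤ 1) (heq : e ≤ q) (hq'e : 1 - e ≤ q')
    (hp' : 1 ≤ p') (hp'p : p' ≤ p) (hμ : 1 ≤ μ) (hj : j ≤ μ * p)
    (hdet : (q:ℤ) * p' - p * q' = 2 * e - 1)
    (hb : b < p) (hvb : p * v + b = j * q + (q - e)) :
    v * (μ * p + p') ≤ j * (μ * q + q') + (μ * q + q' - (1 - e)) ∧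
      j * (μ * q + q') + (μ * q + q' - (1 - e)) < (v + 1) * (μ * p + p') := by
  have hp : 0 < p := le_trans hp' hp'p
  have hQE : 1 - e ≤ μ * q + q' := le_trans hq'e (Nat.le_add_left _ _)
  have hvbz : (p:ℤ) * v + b = j * q + ((q:ℤ) - e) := by
    have h := hvb; zify [heq] at h; linarith [h]
  obtain ⟨P, hP⟩ : ∃ P : ℤ, P = (μ:ℤ) * p + p' := ⟨_, rfl⟩
  obtain ⟨Q, hQ⟩ : ∃ Q : ℤ, Q = (μ:ℤ) * q + q' := ⟨_, rfl⟩
  have key : (p:ℤ) * ((j:ℤ) * Q + (Q - (1 - e)))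
      = (p:ℤ) * (P * v) + P * ((b:ℤ) + e) + ((j:ℤ)+1) * (1 - 2*e) - (p:ℤ) * (1 - e) := by
    linear_combination (-P) * hvbz - ((j:ℤ)+1) * hdet
      + (-(q:ℤ)*((j:ℤ)+1)) * hP + ((p:ℤ)*((j:ℤ)+1)) * hQ
  have hμ1 : (1:ℤ) ≤ (μ:ℤ) := by exact_mod_cast hμ
  have hp1 : (1:ℤ) ≤ (p:ℤ) := by exact_mod_cast hp
  have hp'1 : (1:ℤ) ≤ (p':ℤ) := by exact_mod_cast hp'
  have hμpz : (p:ℤ) ≤ (μ:ℤ) * p :=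
    le_mul_of_one_le_left (by positivity) hμ1
  have hPpos : (0:ℤ) < P := by rw [hP]; linarith
  have hPp : (p:ℤ) ≤ P := by rw [hP]; linarith
  have hjP : (j:ℤ) + 1 ≤ P := by
    have hjz : (j:ℤ) ≤ (μ:ℤ) * p := by exact_mod_cast hj
    rw [hP]; linarith
  have hbz : (b:ℤ) + 1 ≤ (p:ℤ) := by exact_mod_cast hb
  have hjz0 : (0:ℤ) ≤ (j:ℤ) := by positivity
  have he01 : e = 0 ∨ e = 1 := by omega
  have core1 : 0 ≤ P * ((b:ℤ) + e) + ((j:ℤ)+1) * (1 - 2*e) - (p:ℤ) * (1 - e) := by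
    rcases he01 with h | h <;> subst h
    · rcases Nat.eq_zero_or_pos b with hb0 | hb1
      · subst hb0
        have hdvd : p ∣ (j + 1) * q := by
          refine ⟨v, ?_⟩
          have h1 : (j + 1) * q = j * q + q := by ring
          omega
        have hpj : p ≤ j + 1 :=
          Nat.le_of_dvd (by omega)
            ((cop_pq (by norm_num) hdet).dvd_of_dvd_mul_right hdvd)
        have hpjz : (p:ℤ) ≤ (j:ℤ) + 1 := by exact_mod_cast hpj
        have hr : P * (((0:ℕ):ℤ) + (0:ℕ)) + ((j:ℤ)+1) * (1 - 2*(0:ℕ)) - (p:ℤ) * (1 - (0:ℕ))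
            = ((j:ℤ) + 1) - p := by push_cast; ring
        linarith [hr]
      · have hb1z : (1:ℤ) ≤ (b:ℤ) := by exact_mod_cast hb1
        have h1 : P ≤ P * (b:ℤ) := le_mul_of_one_le_right hPpos.le hb1z
        have hr : P * ((b:ℤ) + (0:ℕ)) + ((j:ℤ)+1) * (1 - 2*(0:ℕ)) - (p:ℤ) * (1 - (0:ℕ))
            = P * (b:ℤ) + ((j:ℤ) + 1) - p := by push_cast; ring
        linarith [hr]
    · have h1 : P ≤ P * ((b:ℤ) + 1) := le_mul_of_one_le_right hPpos.le (by linarith)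
      have hr : P * ((b:ℤ) + (1:ℕ)) + ((j:ℤ)+1) * (1 - 2*(1:ℕ)) - (p:ℤ) * (1 - (1:ℕ))
          = P * ((b:ℤ) + 1) - ((j:ℤ) + 1) := by push_cast; ring
      linarith [hr]
  have core2 : P * ((b:ℤ) + e) + ((j:ℤ)+1) * (1 - 2*e) - (p:ℤ) * (1 - e) < (p:ℤ) * P := by
    rcases he01 with h | h <;> subst h
    · have h1 : P * (b:ℤ) ≤ P * ((p:ℤ) - 1) :=
        mul_le_mul_of_nonneg_left (by linarith) hPpos.le
      have h2 : P * ((p:ℤ) - 1) = (p:ℤ) * P - P := by ring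
      have hr : P * ((b:ℤ) + (0:ℕ)) + ((j:ℤ)+1) * (1 - 2*(0:ℕ)) - (p:ℤ) * (1 - (0:ℕ))
          = P * (b:ℤ) + ((j:ℤ) + 1) - p := by push_cast; ring
      linarith [hr]
    · have h1 : P * ((b:ℤ) + 1) ≤ P * (p:ℤ) :=
        mul_le_mul_of_nonneg_left (by linarith) hPpos.le
      have h2 : P * (p:ℤ) = (p:ℤ) * P := by ring
      have hr : P * ((b:ℤ) + (1:ℕ)) + ((j:ℤ)+1) * (1 - 2*(1:ℕ)) - (p:ℤ) * (1 - (1:ℕ))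
          = P * ((b:ℤ) + 1) - ((j:ℤ) + 1) := by push_cast; ring
      linarith [hr]
  have hez : ((1:ℤ) - e) = ((1 - e : ℕ) : ℤ) := by
    have : e = 0 ∨ e = 1 := by omega
    rcases this with h | h <;> subst h <;> simp
  constructor
  · have h1 : (p:ℤ) * ((v:ℤ) * P) ≤ (p:ℤ) * ((j:ℤ) * Q + (Q - (1 - e))) := by
      have hc : (p:ℤ) * ((v:ℤ) * P) = (p:ℤ) * (P * v) := by ring
      rw [key, hc]; linarith
    have h2 := le_of_mul_le_mul_left h1 (by exact_mod_cast hp : (0:ℤ) < (p:ℤ))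
    zify [hQE]
    rw [hP, hQ] at h2
    push_cast at h2 ⊢
    linarith [h2, hez]
  · have h1 : (p:ℤ) * ((j:ℤ) * Q + (Q - (1 - e))) < (p:ℤ) * (((v:ℤ) + 1) * P) := by
      have hc : (p:ℤ) * (((v:ℤ) + 1) * P) = (p:ℤ) * (P * v) + (p:ℤ) * P := by ring
      rw [key, hc]; linarith
    have h2 := lt_of_mul_lt_mul_left h1 (by positivity : (0:ℤ) ≤ (p:ℤ))
    zify [hQE]
    rw [hP, hQ] at h2
    push_cast at h2 ⊢
    linarith [h2, hez]

lemma lemB {p q p' q' e μ i v b : ℕ} (he : e ≤ 1) (heq : e ≤ q) (hq'e : 1 - e ≤ q')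
    (hp' : 1 ≤ p') (hp'p : p' ≤ p) (hμ : 1 ≤ μ) (hi : i ≤ p')
    (hdet : (q:ℤ) * p' - p * q' = 2 * e - 1)
    (hb : b < p') (hvb : p' * v + b = i * q' + (q' - (1 - e))) :
    (μ * q + v) * (μ * p + p') ≤ (μ * p + i) * (μ * q + q') + (μ * q + q' - (1 - e)) ∧
      (μ * p + i) * (μ * q + q') + (μ * q + q' - (1 - e)) < (μ * q + v + 1) * (μ * p + p') := by
  have hp : 0 < p := le_trans hp' hp'p
  have hQE : 1 - e ≤ μ * q + q' := le_trans hq'e (Nat.le_add_left _ _)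
  have hvbz : (p':ℤ) * v + b = i * q' + ((q':ℤ) - (1 - e)) := by
    have h := hvb; zify [hq'e, he] at h; linarith [h]
  obtain ⟨P, hP⟩ : ∃ P : ℤ, P = (μ:ℤ) * p + p' := ⟨_, rfl⟩
  obtain ⟨Q, hQ⟩ : ∃ Q : ℤ, Q = (μ:ℤ) * q + q' := ⟨_, rfl⟩
  have key : (p':ℤ) * (((μ:ℤ) * p + i) * Q + (Q - (1 - e)))
      = (p':ℤ) * (P * ((μ:ℤ) * q + v)) + P * ((b:ℤ) + (1 - e))
        + (μ:ℤ) * (2*e - 1) * ((i:ℤ) + 1 - p') - (p':ℤ) * (1 - e) := by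
    linear_combination (-P) * hvbz + ((μ:ℤ) * ((i:ℤ) + 1 - p')) * hdet
      + (-(q':ℤ)*((i:ℤ)+1) - (μ:ℤ)*q*p' - (1:ℤ)*0) * hP
      + ((p':ℤ)*((μ:ℤ)*p + i) + p') * hQ
  have hp'0 : (0:ℤ) < (p':ℤ) := by exact_mod_cast hp'
  have hμ1 : (1:ℤ) ≤ (μ:ℤ) := by exact_mod_cast hμ
  have hμ0 : (0:ℤ) ≤ (μ:ℤ) := by positivity
  have hp1 : (1:ℤ) ≤ (p:ℤ) := by exact_mod_cast hp
  have hp'1 : (1:ℤ) ≤ (p':ℤ) := by exact_mod_cast hp'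
  have hp'pz : (p':ℤ) ≤ (p:ℤ) := by exact_mod_cast hp'p
  have hiz : (i:ℤ) ≤ (p':ℤ) := by exact_mod_cast hi
  have hμpz : (μ:ℤ) ≤ (μ:ℤ) * p := le_mul_of_one_le_right hμ0 hp1
  have hμp'p : (μ:ℤ) * p' ≤ (μ:ℤ) * p := mul_le_mul_of_nonneg_left hp'pz hμ0
  have hPpos : (0:ℤ) < P := by rw [hP]; linarith
  have hPμp : (μ:ℤ) * p + p' ≤ P := by rw [hP]
  have hbz : (b:ℤ) + 1 ≤ (p':ℤ) := by exact_mod_cast hb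
  have he01 : e = 0 ∨ e = 1 := by omega
  have core1 : 0 ≤ P * ((b:ℤ) + (1 - e)) + (μ:ℤ) * (2*e - 1) * ((i:ℤ) + 1 - p')
      - (p':ℤ) * (1 - e) := by
    rcases he01 with h | h <;> subst h
    · -- e = 0
      have h1 : (μ:ℤ) * ((i:ℤ) + 1 - p') ≤ (μ:ℤ) * 1 :=
        mul_le_mul_of_nonneg_left (by linarith) hμ0
      have h2 : P ≤ P * ((b:ℤ) + 1) := le_mul_of_one_le_right hPpos.le (by linarith)
      have hr : P * ((b:ℤ) + (1 - (0:ℕ))) + (μ:ℤ) * (2*(0:ℕ) - 1) * ((i:ℤ) + 1 - p')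
            - (p':ℤ) * (1 - (0:ℕ))
          = P * ((b:ℤ) + 1) - (μ:ℤ) * ((i:ℤ) + 1 - p') - p' := by push_cast; ring
      linarith [hr]
    · -- e = 1
      have hr : P * ((b:ℤ) + (1 - (1:ℕ))) + (μ:ℤ) * (2*(1:ℕ) - 1) * ((i:ℤ) + 1 - p')
            - (p':ℤ) * (1 - (1:ℕ))
          = P * (b:ℤ) + (μ:ℤ) * ((i:ℤ) + 1 - p') := by push_cast; ring
      rcases le_or_gt p' (i + 1) with hip | hip
      · have hipz : (p':ℤ) ≤ (i:ℤ) + 1 := by exact_mod_cast hip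
        have h1 : 0 ≤ (μ:ℤ) * ((i:ℤ) + 1 - p') := mul_nonneg hμ0 (by linarith)
        have h2 : 0 ≤ P * (b:ℤ) := mul_nonneg hPpos.le (by positivity)
        linarith [hr]
      · rcases Nat.eq_zero_or_pos b with hb0 | hb1
        · exfalso
          subst hb0
          have hdvd : p' ∣ (i + 1) * q' := by
            refine ⟨v, ?_⟩
            have h1 : (i + 1) * q' = i * q' + q' := by ring
            omega
          have : p' ≤ i + 1 :=
            Nat.le_of_dvd (by omega)
              ((cop_pq' (by norm_num) hdet).dvd_of_dvd_mul_right hdvd)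
          omega
        · have hb1z : (1:ℤ) ≤ (b:ℤ) := by exact_mod_cast hb1
          have h1 : P ≤ P * (b:ℤ) := le_mul_of_one_le_right hPpos.le hb1z
          have h2 : (μ:ℤ) * ((p':ℤ) - 1 - i) ≤ (μ:ℤ) * p' :=
            mul_le_mul_of_nonneg_left (by linarith) hμ0
          have h3 : (μ:ℤ) * ((i:ℤ) + 1 - p') = -((μ:ℤ) * ((p':ℤ) - 1 - i)) := by ring
          linarith [hr]
  have core2 : P * ((b:ℤ) + (1 - e)) + (μ:ℤ) * (2*e - 1) * ((i:ℤ) + 1 - p')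
      - (p':ℤ) * (1 - e) < (p':ℤ) * P := by
    rcases he01 with h | h <;> subst h
    · -- e = 0
      have hr : P * ((b:ℤ) + (1 - (0:ℕ))) + (μ:ℤ) * (2*(0:ℕ) - 1) * ((i:ℤ) + 1 - p')
            - (p':ℤ) * (1 - (0:ℕ))
          = P * ((b:ℤ) + 1) - (μ:ℤ) * ((i:ℤ) + 1 - p') - p' := by push_cast; ring
      rcases Nat.lt_or_ge (b + 1) p' with hbp | hbp
      · have hbpz : (b:ℤ) + 1 ≤ (p':ℤ) - 1 := by
          have : (b:ℤ) + 2 ≤ (p':ℤ) := by exact_mod_cast hbp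
          linarith
        have h1 : P * ((b:ℤ) + 1) ≤ P * ((p':ℤ) - 1) :=
          mul_le_mul_of_nonneg_left hbpz hPpos.le
        have h2 : P * ((p':ℤ) - 1) = (p':ℤ) * P - P := by ring
        have h3 : (μ:ℤ) * ((p':ℤ) - 1 - i) ≤ (μ:ℤ) * p' :=
          mul_le_mul_of_nonneg_left (by linarith) hμ0
        have h4 : (μ:ℤ) * ((i:ℤ) + 1 - p') = -((μ:ℤ) * ((p':ℤ) - 1 - i)) := by ring
        linarith [hr]
      · -- b + 1 = p'
        have hbp' : b + 1 = p' := by omega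
        have hq'1 : 1 ≤ q' := by omega
        have hdvd : p' ∣ (i + 1) * q' := by
          refine ⟨v + 1, ?_⟩
          have h1 : (i + 1) * q' = i * q' + q' := by ring
          have h2 : p' * (v + 1) = p' * v + p' := by ring
          omega
        have hip : p' ≤ i + 1 :=
          Nat.le_of_dvd (by omega)
            ((cop_pq' (by norm_num) hdet).dvd_of_dvd_mul_right hdvd)
        have hipz : (p':ℤ) ≤ (i:ℤ) + 1 := by exact_mod_cast hip
        have h1 : 0 ≤ (μ:ℤ) * ((i:ℤ) + 1 - p') := mul_nonneg hμ0 (by linarith)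
        have h2 : (b:ℤ) + 1 = (p':ℤ) := by exact_mod_cast hbp'
        have h3 : P * ((b:ℤ) + 1) = (p':ℤ) * P := by rw [h2]; ring
        linarith [hr]
    · -- e = 1
      have hr : P * ((b:ℤ) + (1 - (1:ℕ))) + (μ:ℤ) * (2*(1:ℕ) - 1) * ((i:ℤ) + 1 - p')
            - (p':ℤ) * (1 - (1:ℕ))
          = P * (b:ℤ) + (μ:ℤ) * ((i:ℤ) + 1 - p') := by push_cast; ring
      have h1 : P * (b:ℤ) ≤ P * ((p':ℤ) - 1) :=
        mul_le_mul_of_nonneg_left (by linarith) hPpos.le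
      have h2 : P * ((p':ℤ) - 1) = (p':ℤ) * P - P := by ring
      have h3 : (μ:ℤ) * ((i:ℤ) + 1 - p') ≤ (μ:ℤ) * 1 :=
        mul_le_mul_of_nonneg_left (by linarith) hμ0
      linarith [hr]
  have hez : ((1:ℤ) - e) = ((1 - e : ℕ) : ℤ) := by
    rcases he01 with h | h <;> subst h <;> simp
  constructor
  · have h1 : (p':ℤ) * (((μ:ℤ) * q + v) * P) ≤ (p':ℤ) * (((μ:ℤ) * p + i) * Q + (Q - (1 - e))) := by
      have hc : (p':ℤ) * (((μ:ℤ) * q + v) * P) = (p':ℤ) * (P * ((μ:ℤ) * q + v)) := by ring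
      rw [key, hc]; linarith
    have h2 := le_of_mul_le_mul_left h1 hp'0
    zify [hQE]
    rw [hP, hQ] at h2
    push_cast at h2 ⊢
    linarith [h2, hez]
  · have h1 : (p':ℤ) * (((μ:ℤ) * p + i) * Q + (Q - (1 - e)))
        < (p':ℤ) * ((((μ:ℤ) * q + v) + 1) * P) := by
      have hc : (p':ℤ) * ((((μ:ℤ) * q + v) + 1) * P)
          = (p':ℤ) * (P * ((μ:ℤ) * q + v)) + (p':ℤ) * P := by ring
      rw [key, hc]; linarith
    have h2 := lt_of_mul_lt_mul_left h1 hp'0.le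
    zify [hQE]
    rw [hP, hQ] at h2
    push_cast at h2 ⊢
    linarith [h2, hez]

lemma count_w_eq {w : List ℤ} {p q r : ℕ} (hg : IsGood w p q r) (hp : 0 < p) :
    w.count 1 = q := by
  obtain ⟨hlen, hr, hcnt⟩ := hg
  have h := hcnt p le_rfl
  rw [List.take_of_length_le (le_of_eq hlen)] at h
  rw [h, Nat.mul_add_div hp, Nat.div_eq_of_lt hr, Nat.add_zero]

lemma count_take_flatten {w : List ℤ} {p q r : ℕ} (hg : IsGood w p q r) (hp : 0 < p) :
    ∀ (μ : ℕ) (w' : List ℤ) (j : ℕ), j ≤ μ * p →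
      (((List.replicate μ w).flatten ++ w').take j).count 1 = (j * q + r) / p := by
  obtain ⟨hlen, hr, hcnt⟩ := hg
  intro μ
  induction μ with
  | zero =>
    intro w' j hj
    have : j = 0 := by omega
    subst this
    simp [Nat.div_eq_of_lt hr]
  | succ m ih =>
    intro w' j hj
    rw [List.replicate_succ, List.flatten_cons, List.append_assoc,
      List.take_append, List.count_append]
    rcases le_or_gt j p with hjp | hjp
    · have h1 : j - w.length = 0 := by omega
      rw [h1]
      simp [hcnt j hjp]
    · rw [List.take_of_length_le (by omega : w.length ≤ j), ih w' (j - w.length) (by have hmp : (m+1)*p = m*p + p := Nat.succ_mul m p; omega)]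
      have hcw : w.count 1 = q := count_w_eq ⟨hlen, hr, hcnt⟩ hp
      rw [hcw, hlen]
      have h2 : j * q + r = ((j - p) * q + r) + p * q := by
        have : (j - p) * q + p * q = j * q := by
          rw [← Nat.add_mul]
          congr 1
          omega
        omega
      rw [h2, Nat.add_mul_div_left _ _ hp]
      omega

def SWInv (prev cur : List ℤ) (p' q' p q e : ℕ) : Prop :=
  e ≤ 1 ∧ 1 ≤ q ∧ e ≤ q ∧ 1 ≤ p' ∧ p' ≤ p ∧ 1 - e ≤ q' ∧
  IsGood prev p' q' (q' - (1 - e)) ∧ IsGood cur p q (q - e) ∧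
  (q:ℤ) * p' - p * q' = 2 * e - 1

lemma inv_step {prev cur : List ℤ} {p' q' p q e : ℕ} (μ : ℕ) (hμ : 1 ≤ μ)
    (h : SWInv prev cur p' q' p q e) :
    SWInv cur ((List.replicate μ cur).flatten ++ prev) p q (μ * p + p') (μ * q + q') (1 - e) := by
  obtain ⟨he, hq1, heq, hp'1, hp'p, hq'e, hgp, hgc, hdet⟩ := h
  have hp : 0 < p := le_trans hp'1 hp'p
  have hgood : IsGood ((List.replicate μ cur).flatten ++ prev) (μ * p + p') (μ * q + q')
      (μ * q + q' - (1 - e)) := by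
    refine ⟨?_, ?_, ?_⟩
    · rw [List.length_append, List.length_flatten, List.map_replicate, List.sum_replicate,
        smul_eq_mul, hgc.1, hgp.1]
    · -- μ*q + q' - (1-e) < μ*p + p'
      have h1 : q - e < p := hgc.2.1
      have h2 : q' - (1 - e) < p' := hgp.2.1
      have h3 : μ * q ≤ μ * p := Nat.mul_le_mul_left μ (by omega)
      rcases (by omega : e = 0 ∨ e = 1) with h | h <;> subst h
      · -- q ≤ p - 1 so μ*q ≤ μ*p - μ
        have h4 : μ * q + μ ≤ μ * p := by
          have : μ * (q + 1) ≤ μ * p := Nat.mul_le_mul_left μ (by omega)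
          have h5 : μ * (q + 1) = μ * q + μ := by ring
          omega
        omega
      · omega
    · intro j hj
      rcases le_or_gt j (μ * p) with hjp | hjp
      · rw [count_take_flatten hgc hp μ prev j hjp]
        set v := (j * q + (q - e)) / p with hv
        set b := (j * q + (q - e)) % p with hb
        have hvb : p * v + b = j * q + (q - e) := Nat.div_add_mod _ p
        have hblt : b < p := Nat.mod_lt _ hp
        exact (Nat.div_eq_of_lt_le (lemA he heq hq'e hp'1 hp'p hμ hjp hdet hblt hvb).1
          (lemA he heq hq'e hp'1 hp'p hμ hjp hdet hblt hvb).2).symm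
      · -- j = μ*p + i with 1 ≤ i ≤ p'
        have hflen : ((List.replicate μ cur).flatten).length = μ * p := by
          rw [List.length_flatten, List.map_replicate, List.sum_replicate, smul_eq_mul, hgc.1]
        rw [List.take_append, List.take_of_length_le (by omega), hflen,
          List.count_append]
        have hcf : ((List.replicate μ cur).flatten).count 1 = μ * q := by
          have h1 := count_take_flatten hgc hp μ prev (μ * p) le_rfl
          rw [List.take_append, hflen, List.take_of_length_le (by omega),
            Nat.sub_self, List.take_zero, List.count_append, List.count_nil] at h1
          have h2 : (μ * p * q + (q - e)) / p = μ * q := by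
            have h3 : μ * p * q + (q - e) = p * (μ * q) + (q - e) := by ring_nf
            rw [h3, Nat.mul_add_div hp, Nat.div_eq_of_lt hgc.2.1, Nat.add_zero]
          omega
        rw [hcf]
        set i := j - μ * p with hi
        have hip : i ≤ p' := by omega
        have hji : j = μ * p + i := by omega
        rw [hgp.2.2 i hip]
        set v := (i * q' + (q' - (1 - e))) / p' with hv
        set b := (i * q' + (q' - (1 - e))) % p' with hb
        have hvb : p' * v + b = i * q' + (q' - (1 - e)) := Nat.div_add_mod _ p'
        have hblt : b < p' := Nat.mod_lt _ hp'1
        rw [hji]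
        exact (Nat.div_eq_of_lt_le (lemB he heq hq'e hp'1 hp'p hμ hip hdet hblt hvb).1
          (lemB he heq hq'e hp'1 hp'p hμ hip hdet hblt hvb).2).symm
  have hμq : 1 ≤ μ * q := Nat.mul_pos hμ hq1
  refine ⟨by omega, by omega, by omega, by omega, ?_, by omega, ?_, ?_, ?_⟩
  · -- p ≤ μ*p + p'
    have : p ≤ μ * p := Nat.le_mul_of_pos_left p hμ
    omega
  · -- IsGood cur p q (q - (1 - (1 - e)))
    have : q - (1 - (1 - e)) = q - e := by omega
    rw [this]; exact hgc
  · exact hgood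
  · -- new determinant
    have h1 : ((μ * q + q' : ℕ) : ℤ) = (μ:ℤ) * q + q' := by push_cast; ring
    have h2 : ((μ * p + p' : ℕ) : ℤ) = (μ:ℤ) * p + p' := by push_cast; ring
    rw [h1, h2]
    have h3 : ((1 - e : ℕ) : ℤ) = 1 - (e:ℤ) := by
      rcases (by omega : e = 0 ∨ e = 1) with h | h <;> subst h <;> simp
    rw [h3]
    linear_combination -hdet

lemma periodic_count {w : List ℤ} {p q r : ℕ} (hp : 0 < p) (hg : IsGood w p q r) :
    ∀ j : ℕ, ((Finset.range j).filter (fun i => w.getD (i % p) 0 = 1)).card = (j * q + r) / p := by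
  obtain ⟨hlen, hr, hcnt⟩ := hg
  have hletter : ∀ b, b < p →
      ((if w.getD b 0 = 1 then 1 else 0) : ℕ) = ((b+1) * q + r) / p - (b * q + r) / p ∧
        (b * q + r) / p ≤ ((b+1) * q + r) / p := by
    intro b hbp
    have hb' : b < w.length := by omega
    have h1 := hcnt b (le_of_lt hbp)
    have h2 := hcnt (b+1) hbp
    rw [List.take_succ, List.getElem?_eq_getElem hb', List.count_append] at h2
    have hgd : w.getD b 0 = w[b] := by
      rw [List.getD_eq_getElem?_getD, List.getElem?_eq_getElem hb', Option.getD_some]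
    have h3 : (List.count 1 (some w[b]).toList) = if w.getD b 0 = 1 then 1 else 0 := by
      rw [hgd]
      simp [List.count_cons]
    rw [h3, h1] at h2
    constructor
    · omega
    · omega
  intro j
  induction j with
  | zero => simp [Nat.div_eq_of_lt hr]
  | succ n ihn =>
    rw [Finset.range_add_one, Finset.filter_insert]
    have hbp : n % p < p := Nat.mod_lt _ hp
    obtain ⟨hl, hmono⟩ := hletter (n % p) hbp
    have hnd : n = p * (n / p) + n % p := (Nat.div_add_mod n p).symm
    have hd1 : (n * q + r) / p = ((n % p) * q + r) / p + (n / p) * q := by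
      have he1 : n * q + r = ((n % p) * q + r) + p * ((n / p) * q) := by
        conv_lhs => rw [hnd]
        ring
      rw [he1, Nat.add_mul_div_left _ _ hp]
    have hd2 : ((n + 1) * q + r) / p = ((n % p + 1) * q + r) / p + (n / p) * q := by
      have he2 : (n + 1) * q + r = ((n % p + 1) * q + r) + p * ((n / p) * q) := by
        conv_lhs => rw [hnd]
        ring
      rw [he2, Nat.add_mul_div_left _ _ hp]
    by_cases hw : w.getD (n % p) 0 = 1
    · rw [if_pos hw, Finset.card_insert_of_notMem (by simp), ihn]
      rw [if_pos hw] at hl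
      omega
    · rw [if_neg hw, ihn]
      rw [if_neg hw] at hl
      omega

lemma cfVal_nonneg : ∀ l : List ℕ, 0 ≤ cfVal l := by
  intro l
  induction l with
  | nil => simp [cfVal]
  | cons a l ih =>
    rw [cfVal]
    positivity

lemma cfVal_pos {l : List ℕ} (hne : l ≠ []) (hpos : ∀ a ∈ l, 1 ≤ a) : 1 ≤ cfVal l := by
  rcases l with _ | ⟨a, l⟩
  · exact absurd rfl hne
  · rw [cfVal]
    have h1 : (1:ℚ) ≤ (a:ℚ) := by
      exact_mod_cast hpos a (List.mem_cons_self)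
    have h2 : (0:ℚ) ≤ (cfVal l)⁻¹ := inv_nonneg.mpr (cfVal_nonneg l)
    linarith

def swStep : (List ℤ × List ℤ) → ℕ → (List ℤ × List ℤ) :=
  fun p μ => (p.2, (List.replicate μ p.2).flatten ++ p.1)

lemma fold_main : ∀ (l : List ℕ), (∀ a ∈ l, 1 ≤ a) →
    ∀ (prev cur : List ℤ) (p' q' p q e : ℕ), SWInv prev cur p' q' p q e →
    ∃ P Q E : ℕ, E ≤ 1 ∧ 1 ≤ Q ∧ E ≤ Q ∧ 0 < P ∧
      IsGood (l.foldl swStep (prev, cur)).2 P Q (Q - E) ∧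
      Nat.Coprime P Q ∧
      (l = [] → P = p ∧ Q = q) ∧
      (l ≠ [] → ((p:ℚ) * cfVal l + p') * Q = ((q:ℚ) * cfVal l + q') * P) := by
  intro l
  induction l with
  | nil =>
    intro _ prev cur p' q' p q e h
    obtain ⟨he, hq1, heq, hp'1, hp'p, hq'e, hgp, hgc, hdet⟩ := h
    exact ⟨p, q, e, he, hq1, heq, lt_of_lt_of_le hp'1 hp'p, hgc, cop_pq he hdet,
      fun _ => ⟨rfl, rfl⟩, fun hc => absurd rfl hc⟩
  | cons a l ih =>
    intro hpos prev cur p' q' p q e h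
    have ha : 1 ≤ a := hpos a (List.mem_cons_self)
    have hposl : ∀ x ∈ l, 1 ≤ x := fun x hx => hpos x (List.mem_cons_of_mem _ hx)
    have hstep := inv_step a ha h
    obtain ⟨P, Q, E, h1, h2, h3, h4, h5, h6, h7, h8⟩ :=
      ih hposl cur ((List.replicate a cur).flatten ++ prev) p q (a * p + p') (a * q + q') (1 - e)
        hstep
    refine ⟨P, Q, E, h1, h2, h3, h4, ?_, h6, fun hc => absurd hc (List.cons_ne_nil a l), ?_⟩
    · rw [List.foldl_cons]
      exact h5
    · intro _
      by_cases hl : l = []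
      · subst hl
        obtain ⟨hP, hQ⟩ := h7 rfl
        subst hP; subst hQ
        rw [show cfVal [a] = (a:ℚ) by rw [cfVal, cfVal]; simp]
        push_cast
        ring
      · have hrel := h8 hl
        have hx : (1:ℚ) ≤ cfVal l := cfVal_pos hl hposl
        have hx0 : cfVal l ≠ 0 := by linarith
        have hinv : (cfVal l)⁻¹ * cfVal l = 1 := inv_mul_cancel₀ hx0
        rw [show cfVal (a :: l) = (a:ℚ) + (cfVal l)⁻¹ from rfl]
        push_cast at hrel
        apply mul_right_cancel₀ hx0
        linear_combination hrel + (((p:ℚ) * Q) - ((q:ℚ) * P)) * hinv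

lemma ediv_superadd {N : ℤ} (hN : 0 < N) (a b : ℤ) : a / N + b / N ≤ (a + b) / N := by
  rw [Int.le_ediv_iff_mul_le hN, add_mul]
  have h1 : a / N * N ≤ a := Int.ediv_mul_le a hN.ne'
  have h2 : b / N * N ≤ b := Int.ediv_mul_le b hN.ne'
  linarith


/-- For coprime `n > k ≥ 1` with continued fraction expansion `n/k = [μ₁, …, μ_t]`,
the infinite periodic word obtained by repeating the Smith word built from
`[μ₁ - 1, μ₂, …, μ_t]` is balanced with slope `k / n`: every factor of length `m ≥ 1`
contains between `⌊m k / n⌋` and `⌈m k / n⌉` ones. -/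
theorem smithWord_periodic_balanced (n k : ℕ) (hk : 1 ≤ k) (hkn : k < n)
    (hcop : Nat.Coprime n k) (μ : List ℕ) (hne : μ ≠ [])
    (hpos : ∀ a ∈ μ, 1 ≤ a) (hcanon : μ.length = 1 ∨ μ.getLast! ≠ 1)
    (hval : cfVal μ = (n : ℚ) / k) :
    ∀ n₁ m : ℕ, 1 ≤ m →
      ⌊((m : ℚ) * k / n)⌋
          ≤ (((Finset.Ico n₁ (n₁ + m)).filter
              (fun j => (smithWord μ).getD (j % (smithWord μ).length) 0 = 1)).card : ℤ) ∧
        (((Finset.Ico n₁ (n₁ + m)).filter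
            (fun j => (smithWord μ).getD (j % (smithWord μ).length) 0 = 1)).card : ℤ)
          ≤ ⌈((m : ℚ) * k / n)⌉ := by
  rcases μ with _ | ⟨μ₁, rest⟩
  · exact absurd rfl hne
  have hμ₁ : 1 ≤ μ₁ := hpos μ₁ (List.mem_cons_self)
  have hposrest : ∀ a ∈ rest, 1 ≤ a := fun a ha => hpos a (List.mem_cons_of_mem _ ha)
  -- base invariant
  have hbase : SWInv [0] (List.replicate (μ₁ - 1) (0:ℤ) ++ [1]) 1 0 μ₁ 1 1 := by
    refine ⟨le_rfl, le_rfl, le_rfl, le_rfl, hμ₁, by omega, ?_, ?_, by push_cast; ring⟩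
    · refine ⟨rfl, by omega, ?_⟩
      intro j hj
      interval_cases j <;> simp
    · refine ⟨by simp; omega, by omega, ?_⟩
      intro j hj
      rw [List.take_append]
      have hrepl : (List.replicate (μ₁ - 1) (0:ℤ)).length = μ₁ - 1 := List.length_replicate
      rw [List.count_append]
      have h1 : List.count 1 ((List.replicate (μ₁ - 1) (0:ℤ)).take j) = 0 := by
        rw [List.take_replicate, List.count_replicate]
        simp
      rw [h1, hrepl]
      have hrw : j * 1 + (1 - 1) = j := by omega
      rw [hrw]
      rcases lt_or_ge j μ₁ with hj1 | hj1
      · have h2 : j - (μ₁ - 1) = 0 := by omega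
        rw [h2]
        simp [Nat.div_eq_of_lt hj1]
      · have h3 : j = μ₁ := by omega
        have h4 : j - (μ₁ - 1) = 1 := by omega
        rw [h4, h3]
        simp [Nat.div_self (by omega : 0 < μ₁)]
  obtain ⟨P, Q, E, hE1, hQ1, hEQ, hP0, hgood, hcopPQ, hnil, hcons⟩ :=
    fold_main rest hposrest [0] (List.replicate (μ₁ - 1) (0:ℤ) ++ [1]) 1 0 μ₁ 1 1 hbase
  have hsw : smithWord (μ₁ :: rest) =
      (rest.foldl swStep (([0] : List ℤ), List.replicate (μ₁ - 1) (0:ℤ) ++ [1])).2 := rfl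
  have hk0 : (k:ℚ) ≠ 0 := by positivity
  -- identify P = n, Q = k
  have hNQ : n * Q = k * P := by
    have hgoal : (n:ℚ) * Q = k * P := by
      by_cases hrest : rest = []
      · subst hrest
        obtain ⟨hP, hQ⟩ := hnil rfl
        have h1 : cfVal [μ₁] = (μ₁:ℚ) := by rw [cfVal, cfVal]; simp
        rw [h1] at hval
        have h2 : (μ₁:ℚ) * k = n := by
          field_simp at hval
          linarith [hval]
        rw [hP, hQ]
        push_cast
        linear_combination -h2
      · have hrel := hcons hrest
        have hx : (1:ℚ) ≤ cfVal rest := cfVal_pos hrest hposrest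
        have hx0 : cfVal rest ≠ 0 := by linarith
        have hinv : (cfVal rest)⁻¹ * cfVal rest = 1 := inv_mul_cancel₀ hx0
        have hval' : ((μ₁:ℚ) + (cfVal rest)⁻¹) * k = n := by
          rw [show cfVal (μ₁ :: rest) = (μ₁:ℚ) + (cfVal rest)⁻¹ from rfl] at hval
          rw [hval]
          field_simp
        have e1 : (n:ℚ) * cfVal rest = (k:ℚ) * ((μ₁:ℚ) * cfVal rest + 1) := by
          linear_combination (-(cfVal rest)) * hval' + (k:ℚ) * hinv
        push_cast at hrel
        apply mul_right_cancel₀ hx0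
        linear_combination (k:ℚ) * hrel + (Q:ℚ) * e1
    exact_mod_cast hgoal
  have hn0 : 0 < n := by omega
  have hPn : P = n := by
    have h1 : n ∣ P := hcop.dvd_of_dvd_mul_right ⟨Q, by linarith [hNQ, mul_comm k P]⟩
    have h2 : P ∣ n := hcopPQ.dvd_of_dvd_mul_right ⟨k, by linarith [hNQ, mul_comm n Q]⟩
    exact Nat.dvd_antisymm h2 h1
  have hQk : Q = k := by
    refine Nat.eq_of_mul_eq_mul_left hn0 ?_
    rw [hNQ, hPn, Nat.mul_comm]
  rw [hPn, hQk] at hgood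
  rw [hQk] at hEQ hQ1
  -- counting
  have hlen : (smithWord (μ₁ :: rest)).length = n := by rw [hsw]; exact hgood.1
  have hcount := periodic_count hn0 hgood
  intro n₁ m hm
  simp only [hsw, hgood.1]
  set W := (rest.foldl swStep (([0] : List ℤ), List.replicate (μ₁ - 1) (0:ℤ) ++ [1])).2 with hW
  set pred := fun i => W.getD (i % n) 0 = 1 with hpred
  have hsplit : ((Finset.range (n₁ + m)).filter pred).card
      = ((Finset.range n₁).filter pred).card + ((Finset.Ico n₁ (n₁ + m)).filter pred).card := by
    rw [Finset.range_eq_Ico,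
      ← Finset.Ico_union_Ico_eq_Ico (Nat.zero_le n₁) (by omega : n₁ ≤ n₁ + m),
      Finset.filter_union,
      Finset.card_union_of_disjoint
        (Finset.disjoint_filter_filter (Finset.Ico_disjoint_Ico_consecutive 0 n₁ (n₁ + m))), Finset.range_eq_Ico]
  have hc1 := hcount n₁
  have hc2 := hcount (n₁ + m)
  rw [hc1, hc2] at hsplit
  set r := k - E with hr
  have hcard : (((Finset.Ico n₁ (n₁ + m)).filter pred).card : ℤ)
      = ((n₁ + m) * k + r : ℕ) / (n:ℤ) - ((n₁ * k + r : ℕ) : ℤ) / (n:ℤ) := by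
    rw [← Int.natCast_div, ← Int.natCast_div]
    omega
  have hNz : (0:ℤ) < (n:ℤ) := by exact_mod_cast hn0
  have hxy1 : (((n₁ + m) * k + r : ℕ) : ℤ) = ((n₁ * k + r : ℕ) : ℤ) + ((m * k : ℕ) : ℤ) := by
    push_cast; ring
  have hfloor : ⌊((m:ℚ) * k / n)⌋ = ((m * k : ℕ) : ℤ) / (n:ℤ) := by
    rw [show ((m:ℚ) * k) = (((m * k : ℕ) : ℤ) : ℚ) by push_cast; ring]
    exact Rat.floor_intCast_div_natCast _ _
  have hceil : ⌈((m:ℚ) * k / n)⌉ = -((-((m * k : ℕ) : ℤ)) / (n:ℤ)) := by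
    rw [show ((m:ℚ) * k / n) = -((((-((m * k : ℕ) : ℤ)) : ℤ) : ℚ) / (n:ℚ)) by push_cast; ring,
      Int.ceil_neg, Rat.floor_intCast_div_natCast]
  constructor
  · rw [hcard, hfloor, hxy1]
    have := ediv_superadd hNz ((n₁ * k + r : ℕ) : ℤ) ((m * k : ℕ) : ℤ)
    linarith
  · rw [hcard, hceil, hxy1]
    have := ediv_superadd hNz (((n₁ * k + r : ℕ) : ℤ) + ((m * k : ℕ) : ℤ)) (-((m * k : ℕ) : ℤ))
    have h2 : ((n₁ * k + r : ℕ) : ℤ) + ((m * k : ℕ) : ℤ) + -((m * k : ℕ) : ℤ)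
        = ((n₁ * k + r : ℕ) : ℤ) := by ring
    rw [h2] at this
    linarith
end
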